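/- arXiv:1202.3858 — 4 statements merged into one kernel-verified Lean document; each statement's English description precedes it below -/
import Mathlib

section
/- Let ζ : ℝ^d → ℝ be integrable with compact support. For a lattice function v : ℤ^d → ℝ^d, define the quasi-interpolant ṽ = ζ * (nodal interpolant of v). Then for any ξ ∈ ℤ^d and ρ ∈ ℤ^d \ {0}, the finite difference satisfies the localization formula: ṽ(ξ+ρ) − ṽ(ξ) = ∫_{ℝ^d} χ_{ξ,ρ}(x) · (∇v(x)·ρ) dx, where χ_{ξ,ρ}(x) := ∫_0^1 ζ(ξ + tρ − x) dt. -/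
open MeasureTheory

noncomputable def toR {d : ℕ} (ξ : Fin d → ℤ) : Fin d → ℝ := fun i => (ξ i : ℝ)

/-- **Localization formula.** For an integrable, compactly supported kernel `ζ` and a
Lipschitz, differentiable `v : ℝ^d → ℝ^d`, the finite difference of the quasi-interpolant
`ṽ = ζ * v` along a lattice direction `ρ` equals the localized integral
`∫ χ_{ξ,ρ}(x) ∇_ρ v(x) dx` with `χ_{ξ,ρ}(x) = ∫_0^1 ζ(ξ + tρ - x) dt`. -/
theorem stmt_0 {d : ℕ}
    (ζ : (Fin d → ℝ) → ℝ) (hζint : Integrable ζ) (hζsupp : HasCompactSupport ζ)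
    (v : (Fin d → ℝ) → (Fin d → ℝ))
    (K : NNReal) (hlip : LipschitzWith K v) (hdiff : Differentiable ℝ v)
    (ξ ρ : Fin d → ℤ) (hρ : ρ ≠ 0) :
    (∫ y, ζ (toR ξ + toR ρ - y) • v y) - (∫ y, ζ (toR ξ - y) • v y)
      = ∫ x, (∫ t in (0:ℝ)..1, ζ (toR ξ + t • toR ρ - x)) • (fderiv ℝ v x (toR ρ)) := by
  classical
  set c := toR ξ with hc
  set r := toR ρ with hr
  set D : (Fin d → ℝ) → (Fin d → ℝ) := fun x => fderiv ℝ v x r with hDdef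
  have hζsm : AEStronglyMeasurable ζ volume := hζint.aestronglyMeasurable
  set C : ℝ := (K : ℝ) * ‖r‖ with hC
  have hDmeas : Measurable D := measurable_fderiv_apply_const ℝ v r
  have hDbound : ∀ x, ‖D x‖ ≤ C := by
    intro x
    calc ‖D x‖ ≤ ‖fderiv ℝ v x‖ * ‖r‖ := (fderiv ℝ v x).le_opNorm r
    _ ≤ C := mul_le_mul_of_nonneg_right (norm_fderiv_le_of_lipschitz ℝ hlip) (norm_nonneg _)
  -- substitution z ↦ a - z
  have hsub : ∀ (a : Fin d → ℝ) (w : (Fin d → ℝ) → (Fin d → ℝ)),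
      ∫ y, ζ (a - y) • w y = ∫ z, ζ z • w (a - z) := by
    intro a w
    have h := integral_sub_left_eq_self (fun z => ζ z • w (a - z)) volume a
    simp only [sub_sub_cancel] at h
    exact h
  -- integrability of z ↦ ζ z • w (a - z) for continuous w
  have hint1 : ∀ (a : Fin d → ℝ), Integrable (fun z => ζ z • v (a - z)) := by
    intro a
    have hwc : Continuous fun z : Fin d → ℝ => v (a - z) :=
      hlip.continuous.comp (continuous_const.sub continuous_id)
    obtain ⟨M, hM⟩ := hζsupp.isCompact.exists_bound_of_continuousOn hwc.continuousOn
    refine (hζint.norm.mul_const (max M 0)).mono'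
      (hζsm.smul hwc.aestronglyMeasurable)
      (Filter.Eventually.of_forall fun z => ?_)
    rw [norm_smul]
    by_cases hz : z ∈ tsupport ζ
    · exact mul_le_mul le_rfl ((hM z hz).trans (le_max_left _ _)) (norm_nonneg _) (norm_nonneg _)
    · simp [image_eq_zero_of_notMem_tsupport hz]
  -- FTC along the segment
  have hFTC : ∀ z : Fin d → ℝ,
      v (c + r - z) - v (c - z) = ∫ t in (0:ℝ)..1, D (c + t • r - z) := by
    intro z
    have hmeas : Measurable fun t : ℝ => D (c + t • r - z) :=
      hDmeas.comp (by fun_prop)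
    have hii : IntervalIntegrable (fun t : ℝ => D (c + t • r - z)) volume 0 1 := by
      rw [intervalIntegrable_iff]
      exact Integrable.mono' (integrableOn_const measure_Ioc_lt_top.ne)
        hmeas.aestronglyMeasurable.restrict
        (Filter.Eventually.of_forall fun t => hDbound _)
    have hderiv : ∀ t ∈ Set.uIcc (0:ℝ) 1,
        HasDerivAt (fun t : ℝ => v (c + t • r - z)) (D (c + t • r - z)) t := by
      intro t _
      have h1 : HasDerivAt (fun t : ℝ => c + t • r - z) r t := by
        simpa using (((hasDerivAt_id t).smul_const r).const_add c).sub_const z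
      exact (hdiff (c + t • r - z)).hasFDerivAt.comp_hasDerivAt t h1
    have h := intervalIntegral.integral_eq_sub_of_hasDerivAt hderiv hii
    rw [h]
    norm_num
  -- measure preserving maps
  have hν1 : volume (Set.Ioc (0:ℝ) 1) = 1 := by simp
  have mp_fst : MeasurePreserving (Prod.fst : (Fin d → ℝ) × ℝ → (Fin d → ℝ))
      (volume.prod (volume.restrict (Set.Ioc (0:ℝ) 1))) volume := by
    refine ⟨measurable_fst, ?_⟩
    rw [Measure.map_fst_prod, Measure.restrict_apply_univ, hν1, one_smul]
  have mp_snd : MeasurePreserving (Prod.snd : ℝ × (Fin d → ℝ) → (Fin d → ℝ))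
      ((volume.restrict (Set.Ioc (0:ℝ) 1)).prod volume) volume := by
    refine ⟨measurable_snd, ?_⟩
    rw [Measure.map_snd_prod, Measure.restrict_apply_univ, hν1, one_smul]
  have mpΨ : MeasurePreserving (fun p : ℝ × (Fin d → ℝ) => (p.1, c + p.1 • r - p.2))
      ((volume.restrict (Set.Ioc (0:ℝ) 1)).prod volume)
      ((volume.restrict (Set.Ioc (0:ℝ) 1)).prod volume) := by
    have hgm : Measurable (Function.uncurry fun (t : ℝ) (x : Fin d → ℝ) => c + t • r - x) := by
      fun_prop
    exact MeasurePreserving.skew_product (MeasurePreserving.id _) hgm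
      (Filter.Eventually.of_forall fun t =>
        (Measure.measurePreserving_sub_left volume (c + t • r)).map_eq)
  have mpΦ : MeasurePreserving (fun p : ℝ × (Fin d → ℝ) => c + p.1 • r - p.2)
      ((volume.restrict (Set.Ioc (0:ℝ) 1)).prod volume) volume := mp_snd.comp mpΨ
  -- product integrability
  have hint_f1 : Integrable (fun p : (Fin d → ℝ) × ℝ => ζ p.1 • D (c + p.2 • r - p.1))
      (volume.prod (volume.restrict (Set.Ioc (0:ℝ) 1))) := by
    have hb : Integrable (fun p : (Fin d → ℝ) × ℝ => ‖ζ p.1‖ * C)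
        (volume.prod (volume.restrict (Set.Ioc (0:ℝ) 1))) :=
      (mp_fst.integrable_comp (hζint.norm.mul_const C).aestronglyMeasurable).2
        (hζint.norm.mul_const C)
    refine hb.mono'
      ((hζsm.comp_quasiMeasurePreserving mp_fst.quasiMeasurePreserving).smul
        ((hDmeas.comp (by fun_prop : Measurable fun p : (Fin d → ℝ) × ℝ =>
          c + p.2 • r - p.1)).aestronglyMeasurable))
      (Filter.Eventually.of_forall fun p => ?_)
    rw [norm_smul]
    exact mul_le_mul_of_nonneg_left (hDbound _) (norm_nonneg _)
  have hint_f2 : Integrable (fun p : ℝ × (Fin d → ℝ) => ζ (c + p.1 • r - p.2) • D p.2)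
      ((volume.restrict (Set.Ioc (0:ℝ) 1)).prod volume) := by
    have hb : Integrable (fun p : ℝ × (Fin d → ℝ) => ‖ζ (c + p.1 • r - p.2)‖ * C)
        ((volume.restrict (Set.Ioc (0:ℝ) 1)).prod volume) :=
      (mpΦ.integrable_comp (hζint.norm.mul_const C).aestronglyMeasurable).2
        (hζint.norm.mul_const C)
    refine hb.mono'
      ((hζsm.comp_quasiMeasurePreserving mpΦ.quasiMeasurePreserving).smul
        ((hDmeas.comp measurable_snd).aestronglyMeasurable))
      (Filter.Eventually.of_forall fun p => ?_)
    rw [norm_smul]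
    exact mul_le_mul_of_nonneg_left (hDbound _) (norm_nonneg _)
  -- main chain
  calc (∫ y, ζ (c + r - y) • v y) - ∫ y, ζ (c - y) • v y
      = (∫ z, ζ z • v (c + r - z)) - ∫ z, ζ z • v (c - z) := by
        rw [hsub (c + r) v, hsub c v]
    _ = ∫ z, (ζ z • v (c + r - z) - ζ z • v (c - z)) :=
        (integral_sub (hint1 (c + r)) (hint1 c)).symm
    _ = ∫ z, ∫ t in (0:ℝ)..1, ζ z • D (c + t • r - z) := by
        refine integral_congr_ae (Filter.Eventually.of_forall fun z => ?_)
        show ζ z • v (c + r - z) - ζ z • v (c - z) = ∫ t in (0:ℝ)..1, ζ z • D (c + t • r - z)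
        rw [← smul_sub, hFTC z, intervalIntegral.integral_smul]
    _ = ∫ z, ∫ t in Set.Ioc (0:ℝ) 1, ζ z • D (c + t • r - z) := by
        simp_rw [intervalIntegral.integral_of_le (zero_le_one)]
    _ = ∫ t in Set.Ioc (0:ℝ) 1, ∫ z, ζ z • D (c + t • r - z) :=
        integral_integral_swap hint_f1
    _ = ∫ t in Set.Ioc (0:ℝ) 1, ∫ x, ζ (c + t • r - x) • D x := by
        refine integral_congr_ae (Filter.Eventually.of_forall fun t => ?_)
        have h := integral_sub_left_eq_self (fun x => ζ (c + t • r - x) • D x) volume (c + t • r)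
        simp only [sub_sub_cancel] at h
        exact h
    _ = ∫ x, ∫ t in Set.Ioc (0:ℝ) 1, ζ (c + t • r - x) • D x :=
        integral_integral_swap hint_f2
    _ = ∫ x, (∫ t in (0:ℝ)..1, ζ (c + t • r - x)) • D x := by
        refine integral_congr_ae (Filter.Eventually.of_forall fun x => ?_)
        show ∫ t in Set.Ioc (0:ℝ) 1, ζ (c + t • r - x) • D x
            = (∫ t in (0:ℝ)..1, ζ (c + t • r - x)) • D x
        rw [integral_smul_const, ← intervalIntegral.integral_of_le zero_le_one]
end

section
/- Let ζ : ℝ^d → ℝ be a nonnegative compactly supported function with ζ(ξ) = δ_{0ξ} for ξ ∈ ℤ^d, such that ∑_{ξ∈ℤ^d} ζ(x−ξ) = 1 for all x and such that the associated interpolation reproduces affine functions. For ρ ∈ ℤ^d \ {0} and p ∈ [1,∞), any differentiable u : ℝ^d → ℝ^d with ∇u ∈ L^p and ũ := ζ * u satisfies (∑_{ξ∈ℤ^d} |ũ(ξ+ρ) − ũ(ξ)|^p)^{1/p} ≤ ‖∇_ρ u‖_{L^p} ≤ |ρ| ‖∇u‖_{L^p}. -/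
open MeasureTheory Matrix
open scoped ENNReal NNReal
set_option maxHeartbeats 1600000

/-- **ℓ^p bound for finite differences of the quasi-interpolant.** With a nonnegative,
compactly supported nodal basis function `ζ` whose interpolation reproduces affine
functions, the quasi-interpolant `ũ = ζ * u` of a differentiable `u` with `∇u ∈ L^p`
satisfies `‖D_ρ ũ‖_{ℓ^p} ≤ ‖∇_ρ u‖_{L^p} ≤ |ρ| ‖∇u‖_{L^p}`. -/
theorem stmt_3 {d : ℕ} (ζ : (Fin d → ℝ) → ℝ)
    (hζ0 : ∀ x, 0 ≤ ζ x) (hζc : HasCompactSupport ζ) (hζcont : Continuous ζ)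
    (hnodal : ∀ ξ : Fin d → ℤ, ζ (toR ξ) = if ξ = 0 then 1 else 0)
    (haffine : ∀ (a : ℝ) (b x : Fin d → ℝ),
      ∑' ξ : Fin d → ℤ, (a + b ⬝ᵥ toR ξ) * ζ (x - toR ξ) = a + b ⬝ᵥ x)
    (p : ℝ) (hp : 1 ≤ p)
    (u : (Fin d → ℝ) → (Fin d → ℝ)) (hdiff : Differentiable ℝ u)
    (hLp : Integrable (fun x => ‖fderiv ℝ u x‖ ^ p))
    (ρ : Fin d → ℤ) (hρ : ρ ≠ 0) :
    (∑' ξ : Fin d → ℤ,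
        ‖(∫ y, ζ (toR ξ + toR ρ - y) • u y) - (∫ y, ζ (toR ξ - y) • u y)‖ ^ p) ^ (1/p)
      ≤ (∫ x, ‖fderiv ℝ u x (toR ρ)‖ ^ p) ^ (1/p)
    ∧ (∫ x, ‖fderiv ℝ u x (toR ρ)‖ ^ p) ^ (1/p)
      ≤ ‖toR ρ‖ * (∫ x, ‖fderiv ℝ u x‖ ^ p) ^ (1/p) := by
  classical
  have hp0 : (0:ℝ) < p := lt_of_lt_of_le one_pos hp
  have hpne : p ≠ 0 := hp0.ne'
  set v : Fin d → ℝ := toR ρ with hvdef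
  have hζm : Measurable ζ := hζcont.measurable
  have hum : Continuous u := hdiff.continuous
  have hDm : Measurable (fderiv ℝ u) := measurable_fderiv ℝ u
  have hnm : Measurable (fun x : Fin d → ℝ => ‖fderiv ℝ u x v‖) :=
    (((ContinuousLinearMap.apply ℝ (Fin d → ℝ) v).continuous.measurable).comp hDm).norm
  set g : (Fin d → ℝ) → ℝ≥0∞ := fun x => ENNReal.ofReal ‖fderiv ℝ u x v‖ with hgdef
  have hgm : Measurable g := hnm.ennreal_ofReal
  -- Integrability of ‖D u x v‖^p
  have hintDv : Integrable (fun x : Fin d → ℝ => ‖fderiv ℝ u x v‖ ^ p) := by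
    refine (hLp.const_mul (‖v‖ ^ p)).mono'
      (((Real.continuous_rpow_const hp0.le).measurable.comp hnm).aestronglyMeasurable) ?_
    refine ae_of_all _ fun x => ?_
    rw [Real.norm_of_nonneg (Real.rpow_nonneg (norm_nonneg _) _)]
    calc ‖fderiv ℝ u x v‖ ^ p ≤ (‖fderiv ℝ u x‖ * ‖v‖) ^ p :=
          Real.rpow_le_rpow (norm_nonneg _) ((fderiv ℝ u x).le_opNorm v) hp0.le
      _ = ‖v‖ ^ p * ‖fderiv ℝ u x‖ ^ p := by
          rw [Real.mul_rpow (norm_nonneg _) (norm_nonneg _), mul_comm]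
  have hintDvnn : (0:ℝ) ≤ ∫ x, ‖fderiv ℝ u x v‖ ^ p :=
    integral_nonneg fun x => Real.rpow_nonneg (norm_nonneg _) _
  -- Second inequality
  have second : (∫ x, ‖fderiv ℝ u x v‖ ^ p) ^ (1/p)
      ≤ ‖v‖ * (∫ x, ‖fderiv ℝ u x‖ ^ p) ^ (1/p) := by
    have hmono : ∫ x, ‖fderiv ℝ u x v‖ ^ p ≤ ‖v‖ ^ p * ∫ x, ‖fderiv ℝ u x‖ ^ p := by
      rw [← integral_const_mul]
      refine integral_mono_of_nonneg (ae_of_all _ fun x => Real.rpow_nonneg (norm_nonneg _) _)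
        (hLp.const_mul _) (ae_of_all _ fun x => ?_)
      calc ‖fderiv ℝ u x v‖ ^ p ≤ (‖fderiv ℝ u x‖ * ‖v‖) ^ p :=
            Real.rpow_le_rpow (norm_nonneg _) ((fderiv ℝ u x).le_opNorm v) hp0.le
        _ = ‖v‖ ^ p * ‖fderiv ℝ u x‖ ^ p := by
            rw [Real.mul_rpow (norm_nonneg _) (norm_nonneg _), mul_comm]
    calc (∫ x, ‖fderiv ℝ u x v‖ ^ p) ^ (1/p)
        ≤ (‖v‖ ^ p * ∫ x, ‖fderiv ℝ u x‖ ^ p) ^ (1/p) :=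
          Real.rpow_le_rpow hintDvnn hmono (by positivity)
      _ = ‖v‖ * (∫ x, ‖fderiv ℝ u x‖ ^ p) ^ (1/p) := by
          rw [Real.mul_rpow (by positivity)
            (integral_nonneg fun x => Real.rpow_nonneg (norm_nonneg _) _),
            ← Real.rpow_mul (norm_nonneg v), mul_one_div, div_self hpne, Real.rpow_one]
  refine ⟨?_, second⟩
  -- Partition of unity facts
  have hsum1 : ∀ x, ∑' ξ : Fin d → ℤ, ζ (x - toR ξ) = 1 := by
    intro x
    have := haffine 1 0 x
    simpa [zero_dotProduct] using this
  have hE1 : ∀ x, ∑' ξ : Fin d → ℤ, ENNReal.ofReal (ζ (x - toR ξ)) = 1 := by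
    intro x
    have hs : Summable fun ξ : Fin d → ℤ => ζ (x - toR ξ) := by
      by_contra h
      have h1 := hsum1 x
      rw [tsum_eq_zero_of_not_summable h] at h1
      exact zero_ne_one h1
    rw [← ENNReal.ofReal_tsum_of_nonneg (fun ξ => hζ0 _) hs, hsum1 x, ENNReal.ofReal_one]
  have htoRneg : ∀ ξ : Fin d → ℤ, toR (-ξ) = -toR ξ := fun ξ => funext fun i => by simp [toR]
  have hE1' : ∀ y, ∑' ξ : Fin d → ℤ, ENNReal.ofReal (ζ (y + toR ξ)) = 1 := by
    intro y
    have h := (Equiv.neg (Fin d → ℤ)).tsum_eq (fun ξ => ENNReal.ofReal (ζ (y + toR ξ)))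
    rw [← h]
    simp only [Equiv.neg_apply, htoRneg, ← sub_eq_add_neg]
    exact hE1 y
  -- ∫⁻ ζ = 1 via the unit-cube partition
  have hζint1 : ∫⁻ x, ENNReal.ofReal (ζ x) = 1 := by
    set Q : (Fin d → ℤ) → Set (Fin d → ℝ) :=
      fun η => Set.univ.pi fun i => Set.Ico ((η i : ℝ)) ((η i : ℝ) + 1) with hQ
    have hQm : ∀ η, MeasurableSet (Q η) := fun η =>
      MeasurableSet.univ_pi fun i => measurableSet_Ico
    have hQdis : Pairwise (Function.onFun Disjoint Q) := by
      intro a b hab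
      rw [Function.onFun, Set.disjoint_left]
      intro x hxa hxb
      apply hab
      funext i
      have h1 := hxa i (Set.mem_univ i)
      have h2 := hxb i (Set.mem_univ i)
      have e1 : ⌊x i⌋ = a i := Int.floor_eq_iff.mpr ⟨h1.1, h1.2⟩
      have e2 : ⌊x i⌋ = b i := Int.floor_eq_iff.mpr ⟨h2.1, h2.2⟩
      rw [← e1, e2]
    have hQcov : (⋃ η, Q η) = Set.univ := by
      ext x
      simp only [Set.mem_iUnion, Set.mem_univ, iff_true]
      exact ⟨fun i => ⌊x i⌋, Set.mem_univ_pi.mpr fun i => ⟨Int.floor_le _, Int.lt_floor_add_one _⟩⟩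
    have key : ∀ η, ∫⁻ x in Q η, ENNReal.ofReal (ζ x)
        = ∫⁻ x in Q 0, ENNReal.ofReal (ζ (x + toR η)) := by
      intro η
      have hpre : (fun x : Fin d → ℝ => x + toR η) ⁻¹' (Q η) = Q 0 := by
        ext x
        simp only [Set.mem_preimage, hQ, Set.mem_univ_pi, Pi.add_apply, Set.mem_Ico,
          Pi.zero_apply, Int.cast_zero, toR]
        refine forall_congr' fun i => ?_
        constructor <;> intro h <;> constructor <;> [linarith [h.1]; linarith [h.2];
          linarith [h.1]; linarith [h.2]]
      have h := (measurePreserving_add_right volume (toR η)).setLIntegral_comp_preimage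
        (hQm η) (hζm.ennreal_ofReal)
      rw [hpre] at h
      exact h.symm
    calc ∫⁻ x, ENNReal.ofReal (ζ x)
        = ∫⁻ x in ⋃ η, Q η, ENNReal.ofReal (ζ x) := by rw [hQcov, Measure.restrict_univ]
      _ = ∑' η, ∫⁻ x in Q η, ENNReal.ofReal (ζ x) := lintegral_iUnion hQm hQdis _
      _ = ∑' η, ∫⁻ x in Q 0, ENNReal.ofReal (ζ (x + toR η)) := tsum_congr key
      _ = ∫⁻ x in Q 0, ∑' η, ENNReal.ofReal (ζ (x + toR η)) :=
          (lintegral_tsum fun η =>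
            ((hζm.comp (measurable_id.add_const (toR η))).ennreal_ofReal).aemeasurable).symm
      _ = ∫⁻ x in Q 0, 1 := lintegral_congr fun x => hE1' x
      _ = volume (Q 0) := setLIntegral_one _
      _ = 1 := by
          rw [hQ, volume_pi_pi]
          simp [Real.volume_Ico]
  -- The averaging kernels χ ξ
  set I : Set ℝ := Set.Ioc 0 1 with hIdef
  have hvolI : volume I = 1 := by simp [hIdef, Real.volume_Ioc]
  set χ : (Fin d → ℤ) → (Fin d → ℝ) → ℝ≥0∞ :=
    fun ξ x => ∫⁻ t in I, ENNReal.ofReal (ζ (toR ξ + t • v - x)) with hχdef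
  have hker : ∀ ξ : Fin d → ℤ,
      Measurable fun q : (Fin d → ℝ) × ℝ => ENNReal.ofReal (ζ (toR ξ + q.2 • v - q.1)) :=
    fun ξ => (hζm.comp
      ((measurable_const.add (measurable_snd.smul_const v)).sub measurable_fst)).ennreal_ofReal
  have hχm : ∀ ξ, Measurable (χ ξ) := fun ξ =>
    Measurable.lintegral_prod_right (f := fun x t => ENNReal.ofReal (ζ (toR ξ + t • v - x)))
      (hker ξ)
  have hχmass : ∀ ξ, ∫⁻ x, χ ξ x = 1 := by
    intro ξ
    have hswap : ∫⁻ x, χ ξ x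
        = ∫⁻ t in I, ∫⁻ x, ENNReal.ofReal (ζ (toR ξ + t • v - x)) :=
      lintegral_lintegral_swap (hker ξ).aemeasurable
    rw [hswap]
    have hin : ∀ t : ℝ, ∫⁻ x, ENNReal.ofReal (ζ (toR ξ + t • v - x)) = 1 := by
      intro t
      have h := (Measure.measurePreserving_sub_left volume (toR ξ + t • v)).lintegral_comp
        (hζm.ennreal_ofReal)
      rw [← hζint1]
      exact h
    rw [lintegral_congr hin, setLIntegral_one, hvolI]
  have hχsum : ∀ x, ∑' ξ : Fin d → ℤ, χ ξ x = 1 := by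
    intro x
    have hpt : ∀ t : ℝ, ∑' ξ : Fin d → ℤ, ENNReal.ofReal (ζ (toR ξ + t • v - x)) = 1 := by
      intro t
      rw [← hE1' (t • v - x)]
      refine tsum_congr fun ξ => ?_
      congr 1
      abel
    calc ∑' ξ : Fin d → ℤ, χ ξ x
        = ∑' ξ : Fin d → ℤ, ∫⁻ t in I, ENNReal.ofReal (ζ (toR ξ + t • v - x)) := rfl
      _ = ∫⁻ t in I, ∑' ξ : Fin d → ℤ, ENNReal.ofReal (ζ (toR ξ + t • v - x)) :=
          (lintegral_tsum (fun ξ => ((hζm.comp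
            (((measurable_id.smul_const v).const_add (toR ξ)).sub
              measurable_const)).ennreal_ofReal).aemeasurable)).symm
      _ = ∫⁻ _t in I, 1 := lintegral_congr hpt
      _ = 1 := by rw [setLIntegral_one, hvolI]
  -- measurable g^p
  have hgp_meas : Measurable fun x => g x ^ p := hgm.pow_const _
  -- Jensen's inequality via Hölder
  have hJ : ∀ ξ, (∫⁻ x, χ ξ x * g x) ^ p ≤ ∫⁻ x, χ ξ x * g x ^ p := by
    intro ξ
    rcases eq_or_lt_of_le hp with hp1 | hp1
    · rw [← hp1]
      simp
    · set q := Real.conjExponent p with hqdef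
      have hpq : p.HolderConjugate q := Real.HolderConjugate.conjExponent hp1
      have hqne : q ≠ 0 := hpq.symm.ne_zero
      have hinv : 1/p + 1/q = 1 := by
        simpa [one_div] using hpq.inv_add_inv_eq_one
      have h1 : ∀ x, χ ξ x * g x = (χ ξ x ^ (1/p) * g x) * χ ξ x ^ (1/q) := by
        intro x
        have hx : χ ξ x ^ (1/p) * χ ξ x ^ (1/q) = χ ξ x := by
          rw [← ENNReal.rpow_add_of_nonneg _ _ hpq.one_div_nonneg hpq.symm.one_div_nonneg, hinv,
            ENNReal.rpow_one]
        calc χ ξ x * g x = (χ ξ x ^ (1/p) * χ ξ x ^ (1/q)) * g x := by rw [hx]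
          _ = (χ ξ x ^ (1/p) * g x) * χ ξ x ^ (1/q) := by ring
      have hH := ENNReal.lintegral_mul_le_Lp_mul_Lq volume hpq
        ((((hχm ξ).pow_const (1/p)).mul hgm).aemeasurable)
        (((hχm ξ).pow_const (1/q)).aemeasurable)
      simp only [Pi.mul_apply] at hH
      have e1 : ∀ x, (χ ξ x ^ (1/p) * g x) ^ p = χ ξ x * g x ^ p := by
        intro x
        rw [ENNReal.mul_rpow_of_nonneg _ _ hp0.le, ← ENNReal.rpow_mul,
          one_div_mul_cancel hpne, ENNReal.rpow_one]
      have e2 : ∀ x, (χ ξ x ^ (1/q)) ^ q = χ ξ x := by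
        intro x
        rw [← ENNReal.rpow_mul, one_div_mul_cancel hqne, ENNReal.rpow_one]
      calc (∫⁻ x, χ ξ x * g x) ^ p
          = (∫⁻ x, (χ ξ x ^ (1/p) * g x) * χ ξ x ^ (1/q)) ^ p := by rw [lintegral_congr h1]
        _ ≤ ((∫⁻ x, (χ ξ x ^ (1/p) * g x) ^ p) ^ (1/p)
              * (∫⁻ x, (χ ξ x ^ (1/q)) ^ q) ^ (1/q)) ^ p :=
            ENNReal.rpow_le_rpow hH hp0.le
        _ = ∫⁻ x, χ ξ x * g x ^ p := by
            rw [lintegral_congr e1, lintegral_congr e2, hχmass ξ, ENNReal.one_rpow, mul_one,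
              ← ENNReal.rpow_mul, one_div_mul_cancel hpne, ENNReal.rpow_one]
  have hsum_int : ∑' ξ : Fin d → ℤ, ∫⁻ x, χ ξ x * g x ^ p = ∫⁻ x, g x ^ p := by
    rw [← lintegral_tsum (fun ξ => (((hχm ξ).mul hgp_meas).aemeasurable :
      AEMeasurable (fun x => χ ξ x * g x ^ p)))]
    refine lintegral_congr fun x => ?_
    rw [ENNReal.tsum_mul_right, hχsum x, one_mul]
  have hIgp : ∫⁻ x, g x ^ p = ENNReal.ofReal (∫ x, ‖fderiv ℝ u x v‖ ^ p) := by
    rw [ofReal_integral_eq_lintegral_ofReal hintDv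
      (ae_of_all _ fun x => Real.rpow_nonneg (norm_nonneg _) _)]
    exact lintegral_congr fun x => ENNReal.ofReal_rpow_of_nonneg (norm_nonneg _) hp0.le
  -- finiteness of the sliding averages
  set Φ : (Fin d → ℝ) → ℝ≥0∞ := fun y => ∫⁻ t in I, g (y + t • v) with hΦdef
  have hprod1 : Measurable fun q : (Fin d → ℝ) × ℝ => g (q.1 + q.2 • v) :=
    hgm.comp (measurable_fst.add (measurable_snd.smul_const v))
  have hΦm : Measurable Φ :=
    Measurable.lintegral_prod_right (f := fun y t => g (y + t • v)) hprod1
  have hgfin : ∫⁻ x, ENNReal.ofReal (‖fderiv ℝ u x v‖ ^ p) ≠ ⊤ := by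
    rw [← ofReal_integral_eq_lintegral_ofReal hintDv
      (ae_of_all _ fun x => Real.rpow_nonneg (norm_nonneg _) _)]
    exact ENNReal.ofReal_ne_top
  have hgbound : ∀ x, g x ≤ 1 + ENNReal.ofReal (‖fderiv ℝ u x v‖ ^ p) := by
    intro x
    rcases le_total ‖fderiv ℝ u x v‖ 1 with h | h
    · calc g x = ENNReal.ofReal ‖fderiv ℝ u x v‖ := rfl
        _ ≤ ENNReal.ofReal 1 := ENNReal.ofReal_le_ofReal h
        _ = 1 := ENNReal.ofReal_one
        _ ≤ 1 + ENNReal.ofReal (‖fderiv ℝ u x v‖ ^ p) := le_self_add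
    · refine le_trans (ENNReal.ofReal_le_ofReal ?_) le_add_self
      calc ‖fderiv ℝ u x v‖ = ‖fderiv ℝ u x v‖ ^ (1:ℝ) := (Real.rpow_one _).symm
        _ ≤ ‖fderiv ℝ u x v‖ ^ p := Real.rpow_le_rpow_of_exponent_le h hp
  have hballfin : ∀ n : ℕ, ∫⁻ y in Metric.ball (0 : Fin d → ℝ) n, Φ y ≠ ⊤ := by
    intro n
    set S := Metric.closedBall (0 : Fin d → ℝ) (n + ‖v‖) with hSdef
    have hSfin : volume S + ∫⁻ x, ENNReal.ofReal (‖fderiv ℝ u x v‖ ^ p) ≠ ⊤ :=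
      ENNReal.add_ne_top.mpr ⟨measure_closedBall_lt_top.ne, hgfin⟩
    refine ne_top_of_le_ne_top hSfin ?_
    have hswap : ∫⁻ y in Metric.ball (0 : Fin d → ℝ) n, Φ y
        = ∫⁻ t in I, ∫⁻ y in Metric.ball (0 : Fin d → ℝ) n, g (y + t • v) :=
      lintegral_lintegral_swap hprod1.aemeasurable
    rw [hswap]
    have hbd : ∀ t ∈ I, ∫⁻ y in Metric.ball (0 : Fin d → ℝ) n, g (y + t • v)
        ≤ volume S + ∫⁻ x, ENNReal.ofReal (‖fderiv ℝ u x v‖ ^ p) := by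
      intro t ht
      have hsub : Metric.ball (0 : Fin d → ℝ) n ⊆ (fun y => y + t • v) ⁻¹' S := by
        intro y hy
        simp only [Set.mem_preimage, hSdef, mem_closedBall_zero_iff]
        have h1 : ‖y‖ < n := by simpa [mem_ball_zero_iff] using hy
        have h2 : ‖t • v‖ ≤ ‖v‖ := by
          rw [norm_smul, Real.norm_eq_abs, abs_of_pos ht.1]
          calc t * ‖v‖ ≤ 1 * ‖v‖ := mul_le_mul_of_nonneg_right ht.2 (norm_nonneg v)
            _ = ‖v‖ := one_mul _
        calc ‖y + t • v‖ ≤ ‖y‖ + ‖t • v‖ := norm_add_le _ _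
          _ ≤ n + ‖v‖ := add_le_add h1.le h2
      calc ∫⁻ y in Metric.ball (0 : Fin d → ℝ) n, g (y + t • v)
          ≤ ∫⁻ y in (fun y => y + t • v) ⁻¹' S, g (y + t • v) := lintegral_mono_set hsub
        _ = ∫⁻ x in S, g x := (measurePreserving_add_right volume (t • v)).setLIntegral_comp_preimage
            measurableSet_closedBall hgm
        _ ≤ ∫⁻ x in S, (1 + ENNReal.ofReal (‖fderiv ℝ u x v‖ ^ p)) :=
            lintegral_mono hgbound
        _ = (∫⁻ _x in S, 1) + ∫⁻ x in S, ENNReal.ofReal (‖fderiv ℝ u x v‖ ^ p) :=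
            lintegral_add_left measurable_const _
        _ ≤ volume S + ∫⁻ x, ENNReal.ofReal (‖fderiv ℝ u x v‖ ^ p) := by
            rw [setLIntegral_one]
            exact add_le_add le_rfl (setLIntegral_le_lintegral _ _)
    calc ∫⁻ t in I, ∫⁻ y in Metric.ball (0 : Fin d → ℝ) n, g (y + t • v)
        ≤ ∫⁻ _t in I, (volume S + ∫⁻ x, ENNReal.ofReal (‖fderiv ℝ u x v‖ ^ p)) := by
          refine lintegral_mono_ae ?_
          filter_upwards [ae_restrict_mem measurableSet_Ioc] with t ht using hbd t ht
      _ = (volume S + ∫⁻ x, ENNReal.ofReal (‖fderiv ℝ u x v‖ ^ p)) * volume I :=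
          setLIntegral_const _ _
      _ = volume S + ∫⁻ x, ENNReal.ofReal (‖fderiv ℝ u x v‖ ^ p) := by rw [hvolI, mul_one]
  have hfin : ∀ᵐ y : Fin d → ℝ, Φ y < ⊤ := by
    have hmeasset : MeasurableSet {y : Fin d → ℝ | ¬ Φ y < ⊤} := by
      have : {y : Fin d → ℝ | ¬ Φ y < ⊤} = Φ ⁻¹' {⊤} := by
        ext y
        simp [lt_top_iff_ne_top]
      rw [this]
      exact hΦm (measurableSet_singleton ⊤)
    have hsub : {y : Fin d → ℝ | ¬ Φ y < ⊤}
        ⊆ ⋃ n : ℕ, {y : Fin d → ℝ | ¬ Φ y < ⊤} ∩ Metric.ball (0 : Fin d → ℝ) n := by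
      intro y hy
      obtain ⟨n, hn⟩ := exists_nat_gt ‖y‖
      exact Set.mem_iUnion.mpr ⟨n, hy, by simpa [mem_ball_zero_iff] using hn⟩
    rw [ae_iff]
    refine measure_mono_null hsub (measure_iUnion_null fun n => ?_)
    have h1 := ae_lt_top hΦm (hballfin n)
    rw [ae_iff] at h1
    rwa [Measure.restrict_apply hmeasset] at h1
  -- a.e. FTC bound
  have hae : ∀ᵐ y : Fin d → ℝ, ENNReal.ofReal ‖u (y + v) - u y‖ ≤ Φ y := by
    filter_upwards [hfin] with y hy
    set h : ℝ → (Fin d → ℝ) := fun t => fderiv ℝ u (y + t • v) v with hhdef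
    have hhm : Measurable h :=
      (((ContinuousLinearMap.apply ℝ (Fin d → ℝ) v).continuous.measurable).comp hDm).comp
        ((measurable_id.smul_const v).const_add y)
    have hfi : IntegrableOn h I volume := by
      constructor
      · exact hhm.aestronglyMeasurable
      · rw [hasFiniteIntegral_iff_norm]
        exact hy
    have hii : IntervalIntegrable h volume 0 1 :=
      intervalIntegrable_iff.mpr (by simpa [Set.uIoc_of_le (zero_le_one (α := ℝ))] using hfi)
    have hder : ∀ t ∈ Set.uIcc (0:ℝ) 1, HasDerivAt (fun s => u (y + s • v)) (h t) t := by
      intro t _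
      have h1 : HasDerivAt (fun s : ℝ => y + s • v) v t := by
        simpa using ((hasDerivAt_id t).smul_const v).const_add y
      exact (hdiff (y + t • v)).hasFDerivAt.comp_hasDerivAt t h1
    have heq : u (y + v) - u y = ∫ t in (0:ℝ)..1, h t := by
      have h2 := intervalIntegral.integral_eq_sub_of_hasDerivAt hder hii
      simpa using h2.symm
    calc ENNReal.ofReal ‖u (y + v) - u y‖
        = ENNReal.ofReal ‖∫ t in (0:ℝ)..1, h t‖ := by rw [heq]
      _ ≤ ENNReal.ofReal (∫ t in (0:ℝ)..1, ‖h t‖) :=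
          ENNReal.ofReal_le_ofReal (intervalIntegral.norm_integral_le_integral_norm zero_le_one)
      _ = ENNReal.ofReal (∫ t in I, ‖h t‖) := by
          rw [intervalIntegral.integral_of_le zero_le_one]
      _ = ∫⁻ t in I, ENNReal.ofReal ‖h t‖ :=
          ofReal_integral_eq_lintegral_ofReal hfi.norm (ae_of_all _ fun t => norm_nonneg _)
      _ = Φ y := rfl
  -- integrability of the smoothing integrands
  have hIζw : ∀ (c w : Fin d → ℝ), Integrable (fun y => ζ (c - y) • u (y + w)) := by
    intro c w
    have hcont : Continuous fun y : Fin d → ℝ => ζ (c - y) • u (y + w) :=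
      (hζcont.comp (continuous_const.sub continuous_id)).smul
        (hum.comp (continuous_id.add continuous_const))
    have h1 : HasCompactSupport fun y : Fin d → ℝ => ζ (c - y) :=
      hζc.comp_homeomorph (Homeomorph.subLeft c)
    have hcs : HasCompactSupport fun y : Fin d → ℝ => ζ (c - y) • u (y + w) :=
      HasCompactSupport.smul_right (f' := fun y : Fin d → ℝ => u (y + w)) h1
    exact hcont.integrable_of_hasCompactSupport hcs
  have hIζ0 : ∀ c : Fin d → ℝ, Integrable (fun y => ζ (c - y) • u y) := by
    intro c
    simpa using hIζw c 0
  -- the key pointwise bound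
  have hkey : ∀ ξ : Fin d → ℤ,
      ENNReal.ofReal ‖(∫ y, ζ (toR ξ + v - y) • u y) - ∫ y, ζ (toR ξ - y) • u y‖
        ≤ ∫⁻ x, χ ξ x * g x := by
    intro ξ
    set c : Fin d → ℝ := toR ξ with hcdef
    have e1 : ∫ y, ζ (c + v - y) • u y = ∫ y, ζ (c - y) • u (y + v) := by
      have h := integral_add_right_eq_self (μ := volume) (fun y => ζ (c + v - y) • u y) v
      simp only [add_sub_add_right_eq_sub] at h
      exact h.symm
    have hInt1 := hIζw c v
    have hInt0 := hIζ0 c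
    have e2 : (∫ y, ζ (c + v - y) • u y) - ∫ y, ζ (c - y) • u y
        = ∫ y, ζ (c - y) • (u (y + v) - u y) := by
      rw [e1, ← integral_sub hInt1 hInt0]
      simp [smul_sub]
    have hIntNorm : Integrable fun y => ζ (c - y) * ‖u (y + v) - u y‖ := by
      refine ((hInt1.sub hInt0).norm).congr (ae_of_all _ fun y => ?_)
      show ‖ζ (c - y) • u (y + v) - ζ (c - y) • u y‖ = ζ (c - y) * ‖u (y + v) - u y‖
      rw [← smul_sub, norm_smul, Real.norm_of_nonneg (hζ0 _)]
    rw [e2]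
    calc ENNReal.ofReal ‖∫ y, ζ (c - y) • (u (y + v) - u y)‖
        ≤ ENNReal.ofReal (∫ y, ζ (c - y) * ‖u (y + v) - u y‖) := by
          apply ENNReal.ofReal_le_ofReal
          refine (norm_integral_le_integral_norm _).trans_eq ?_
          refine integral_congr_ae (ae_of_all _ fun y => ?_)
          show ‖ζ (c - y) • (u (y + v) - u y)‖ = ζ (c - y) * ‖u (y + v) - u y‖
          rw [norm_smul, Real.norm_of_nonneg (hζ0 _)]
      _ = ∫⁻ y, ENNReal.ofReal (ζ (c - y)) * ENNReal.ofReal ‖u (y + v) - u y‖ := by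
          rw [ofReal_integral_eq_lintegral_ofReal hIntNorm
            (ae_of_all _ fun y => mul_nonneg (hζ0 _) (norm_nonneg _))]
          exact lintegral_congr fun y => ENNReal.ofReal_mul (hζ0 _)
      _ ≤ ∫⁻ y, ENNReal.ofReal (ζ (c - y)) * Φ y :=
          lintegral_mono_ae (hae.mono fun y hy => mul_le_mul_right hy _)
      _ = ∫⁻ y, ∫⁻ t in I, ENNReal.ofReal (ζ (c - y)) * g (y + t • v) := by
          refine lintegral_congr fun y => ?_
          exact (lintegral_const_mul _ (hgm.comp ((measurable_id.smul_const v).const_add y))).symm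
      _ = ∫⁻ t in I, ∫⁻ y, ENNReal.ofReal (ζ (c - y)) * g (y + t • v) :=
          lintegral_lintegral_swap ((((hζm.comp
            (measurable_const.sub measurable_fst)).ennreal_ofReal).mul
            (hgm.comp (measurable_fst.add (measurable_snd.smul_const v)))).aemeasurable)
      _ = ∫⁻ t in I, ∫⁻ x, ENNReal.ofReal (ζ (c + t • v - x)) * g x := by
          refine lintegral_congr fun t => ?_
          have h := lintegral_add_right_eq_self (μ := volume)
            (fun x => ENNReal.ofReal (ζ (c + t • v - x)) * g x) (t • v)
          simp only [add_sub_add_right_eq_sub] at h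
          exact h
      _ = ∫⁻ x, ∫⁻ t in I, ENNReal.ofReal (ζ (c + t • v - x)) * g x :=
          (lintegral_lintegral_swap ((((hζm.comp
            ((measurable_const.add (measurable_snd.smul_const v)).sub
              measurable_fst)).ennreal_ofReal).mul
            (hgm.comp measurable_fst)).aemeasurable)).symm
      _ = ∫⁻ x, χ ξ x * g x := by
          refine lintegral_congr fun x => ?_
          exact lintegral_mul_const _ ((hζm.comp
            ((((measurable_id.smul_const v).const_add c)).sub measurable_const)).ennreal_ofReal)
  -- assemble the first inequality
  have hfirst_sum : ∑' ξ : Fin d → ℤ,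
      ‖(∫ y, ζ (toR ξ + v - y) • u y) - ∫ y, ζ (toR ξ - y) • u y‖ ^ p
        ≤ ∫ x, ‖fderiv ℝ u x v‖ ^ p := by
    have hEbound : ∑' ξ : Fin d → ℤ, ENNReal.ofReal
        (‖(∫ y, ζ (toR ξ + v - y) • u y) - ∫ y, ζ (toR ξ - y) • u y‖ ^ p)
          ≤ ENNReal.ofReal (∫ x, ‖fderiv ℝ u x v‖ ^ p) := by
      calc ∑' ξ : Fin d → ℤ, ENNReal.ofReal
            (‖(∫ y, ζ (toR ξ + v - y) • u y) - ∫ y, ζ (toR ξ - y) • u y‖ ^ p)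
          = ∑' ξ : Fin d → ℤ, ENNReal.ofReal
            ‖(∫ y, ζ (toR ξ + v - y) • u y) - ∫ y, ζ (toR ξ - y) • u y‖ ^ p :=
            tsum_congr fun ξ => (ENNReal.ofReal_rpow_of_nonneg (norm_nonneg _) hp0.le).symm
        _ ≤ ∑' ξ : Fin d → ℤ, (∫⁻ x, χ ξ x * g x) ^ p :=
            ENNReal.tsum_le_tsum fun ξ => ENNReal.rpow_le_rpow (hkey ξ) hp0.le
        _ ≤ ∑' ξ : Fin d → ℤ, ∫⁻ x, χ ξ x * g x ^ p := ENNReal.tsum_le_tsum hJ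
        _ = ∫⁻ x, g x ^ p := hsum_int
        _ = ENNReal.ofReal (∫ x, ‖fderiv ℝ u x v‖ ^ p) := hIgp
    calc ∑' ξ : Fin d → ℤ,
        ‖(∫ y, ζ (toR ξ + v - y) • u y) - ∫ y, ζ (toR ξ - y) • u y‖ ^ p
        = ∑' ξ : Fin d → ℤ, (ENNReal.ofReal
            (‖(∫ y, ζ (toR ξ + v - y) • u y) - ∫ y, ζ (toR ξ - y) • u y‖ ^ p)).toReal :=
          tsum_congr fun ξ =>
            (ENNReal.toReal_ofReal (Real.rpow_nonneg (norm_nonneg _) _)).symm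
      _ = (∑' ξ : Fin d → ℤ, ENNReal.ofReal
            (‖(∫ y, ζ (toR ξ + v - y) • u y) - ∫ y, ζ (toR ξ - y) • u y‖ ^ p)).toReal :=
          (ENNReal.tsum_toReal_eq fun ξ => ENNReal.ofReal_ne_top).symm
      _ ≤ (ENNReal.ofReal (∫ x, ‖fderiv ℝ u x v‖ ^ p)).toReal :=
          ENNReal.toReal_mono ENNReal.ofReal_ne_top hEbound
      _ = ∫ x, ‖fderiv ℝ u x v‖ ^ p := ENNReal.toReal_ofReal hintDvnn
  exact Real.rpow_le_rpow
    (tsum_nonneg fun ξ => Real.rpow_nonneg (norm_nonneg _) _) hfirst_sum (by positivity)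
end

section
/- Let V : 𝒟_κ → ℝ be C^k with partial derivatives satisfying the summable decay bound ∑_{ρ∈Λ_*^j} m(ρ) = M^{(j)} < ∞ where m(ρ) := (∏|ρ_i|) sup_{g∈𝒟_κ} ‖V_ρ(g)‖. Let g_ξ ∈ 𝒟_κ for each ξ ∈ Λ, and let v_1,…,v_j be lattice displacements with interpolants satisfying ∇v_i ∈ L^{p_i}, ∑ 1/p_i = 1. Then ∑_{ξ∈Λ} ∑_{ρ∈Λ_*^j} |V_ρ(g_ξ)[D_ρ v(ξ)]| ≤ C M^{(j)} ∏_{i=1}^j ‖∇v_i‖_{L^{p_i}}, with C independent of V and the v_i. -/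
open MeasureTheory ENNReal

section Aux

variable {d : ℕ}

private lemma lint_sub_left (f : (Fin d → ℝ) → ℝ≥0∞) (a : Fin d → ℝ) :
    ∫⁻ y, f (a - y) = ∫⁻ y, f y := by
  simp_rw [sub_eq_add_neg]
  calc ∫⁻ y, f (a + -y)
      = ∫⁻ y, f (a + y) ∂(Measure.map Neg.neg volume) :=
        (lintegral_map_equiv (fun y => f (a + y)) (MeasurableEquiv.neg _)).symm
    _ = ∫⁻ y, f (a + y) := by rw [Measure.map_neg_eq_self]
    _ = ∫⁻ y, f y := lintegral_add_left_eq_self f a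

private lemma jensen_prob {α : Type*} [MeasurableSpace α] {μ : Measure α}
    (hμ : μ Set.univ = 1)
    {f : α → ℝ≥0∞} (hf : AEMeasurable f μ) {r : ℝ} (hr : 1 ≤ r) :
    (∫⁻ x, f x ∂μ) ^ r ≤ ∫⁻ x, f x ^ r ∂μ := by
  rcases eq_or_lt_of_le hr with h1 | h1
  · simp [← h1]
  · have hr0 : r ≠ 0 := by positivity
    have hpq : (Real.conjExponent r).HolderConjugate r :=
      (Real.HolderConjugate.conjExponent h1).symm
    have h := ENNReal.lintegral_mul_le_Lp_mul_Lq μ hpq aemeasurable_const hf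
      (f := fun _ => (1:ℝ≥0∞)) (g := f)
    simp only [Pi.mul_apply, one_mul, ENNReal.one_rpow, lintegral_one, hμ,
      ENNReal.one_rpow] at h
    calc (∫⁻ x, f x ∂μ) ^ r ≤ ((∫⁻ x, f x ^ r ∂μ) ^ (1/r)) ^ r :=
          ENNReal.rpow_le_rpow (by simpa using h) (by positivity)
      _ = ∫⁻ x, f x ^ r ∂μ := by
          rw [← ENNReal.rpow_mul, one_div, inv_mul_cancel₀ hr0, ENNReal.rpow_one]

private lemma icc_prob : (volume.restrict (Set.Icc (0:ℝ) 1)) Set.univ = 1 := by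
  rw [Measure.restrict_apply MeasurableSet.univ, Set.univ_inter, Real.volume_Icc]
  norm_num

private lemma key1 (u : (Fin d → ℝ) → (Fin d → ℝ)) (hu : Differentiable ℝ u)
    (y a : Fin d → ℝ) :
    (‖u (y + a) - u y‖₊ : ℝ≥0∞)
      ≤ ∫⁻ t in Set.Icc (0:ℝ) 1, (‖fderiv ℝ u (y + t • a)‖₊ : ℝ≥0∞) * ‖a‖₊ := by
  set g' : ℝ → (Fin d → ℝ) := fun t => fderiv ℝ u (y + t • a) a with hg'def
  have hg : ∀ t : ℝ, HasDerivAt (fun s : ℝ => u (y + s • a)) (g' t) t := by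
    intro t
    have h1 : HasDerivAt (fun s : ℝ => y + s • a) a t := by
      simpa using ((hasDerivAt_id t).smul_const a).const_add y
    exact (hu (y + t • a)).hasFDerivAt.comp_hasDerivAt t h1
  have hg'meas : Measurable g' := by
    have : Measurable (fun z => fderiv ℝ u z a) := measurable_fderiv_apply_const ℝ u a
    exact this.comp ((measurable_id.smul_const a).const_add y)
  have hbd : ∀ t : ℝ, (‖g' t‖₊ : ℝ≥0∞) ≤ (‖fderiv ℝ u (y + t • a)‖₊ : ℝ≥0∞) * ‖a‖₊ := by
    intro t
    exact_mod_cast ENNReal.coe_le_coe.mpr ((fderiv ℝ u (y + t • a)).le_opNNNorm a)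
  by_cases hint : IntervalIntegrable g' volume 0 1
  · have hftc := intervalIntegral.integral_eq_sub_of_hasDerivAt
      (f := fun s : ℝ => u (y + s • a)) (f' := g') (a := 0) (b := 1)
      (fun t _ => hg t) hint
    have h10 : u (y + a) - u y = ∫ t in (0:ℝ)..1, g' t := by
      rw [hftc]; simp
    rw [h10, intervalIntegral.integral_of_le (zero_le_one)]
    calc (‖∫ t in Set.Ioc (0:ℝ) 1, g' t‖₊ : ℝ≥0∞)
        ≤ ∫⁻ t in Set.Ioc (0:ℝ) 1, (‖g' t‖₊ : ℝ≥0∞) :=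
          enorm_integral_le_lintegral_enorm _
      _ ≤ ∫⁻ t in Set.Icc (0:ℝ) 1, (‖g' t‖₊ : ℝ≥0∞) :=
          lintegral_mono_set Set.Ioc_subset_Icc_self
      _ ≤ _ := lintegral_mono fun t => hbd t
  · have htop : ∫⁻ t in Set.Icc (0:ℝ) 1, (‖fderiv ℝ u (y + t • a)‖₊ : ℝ≥0∞) * ‖a‖₊ = ∞ := by
      by_contra hne
      apply hint
      rw [intervalIntegrable_iff, Set.uIoc_of_le zero_le_one]
      refine ⟨hg'meas.stronglyMeasurable.aestronglyMeasurable, ?_⟩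
      show (∫⁻ t in Set.Ioc (0:ℝ) 1, (‖g' t‖₊ : ℝ≥0∞)) < ⊤
      calc ∫⁻ t in Set.Ioc (0:ℝ) 1, (‖g' t‖₊ : ℝ≥0∞)
          ≤ ∫⁻ t in Set.Icc (0:ℝ) 1, (‖g' t‖₊ : ℝ≥0∞) :=
            lintegral_mono_set Set.Ioc_subset_Icc_self
        _ ≤ ∫⁻ t in Set.Icc (0:ℝ) 1, (‖fderiv ℝ u (y + t • a)‖₊ : ℝ≥0∞) * ‖a‖₊ :=
            lintegral_mono fun t => hbd t
        _ < ∞ := lt_top_iff_ne_top.mpr hne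
    rw [htop]; exact le_top

private lemma conv_lp (ζ : (Fin d → ℝ) → ℝ) (hζcont : Continuous ζ)
    (hZsum : ∀ y, ∑' ξ : Fin d → ℤ, ENNReal.ofReal (ζ (toR ξ - y)) = 1)
    {G : (Fin d → ℝ) → ℝ≥0∞} (hG : Measurable G) {r : ℝ} (hr : 1 ≤ r) :
    ∑' ξ : Fin d → ℤ, (∫⁻ y, ENNReal.ofReal (ζ (toR ξ - y)) * G y) ^ r
      ≤ (∫⁻ x, ENNReal.ofReal (ζ x)) ^ (r - 1) * ∫⁻ y, G y ^ r := by
  set c0 := ∫⁻ x, ENNReal.ofReal (ζ x) with hc0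
  set Z : (Fin d → ℤ) → (Fin d → ℝ) → ℝ≥0∞ := fun ξ y => ENNReal.ofReal (ζ (toR ξ - y))
    with hZ
  have hZm : ∀ ξ, Measurable (Z ξ) := fun ξ =>
    ENNReal.measurable_ofReal.comp (hζcont.comp (continuous_const.sub continuous_id)).measurable
  have hZint : ∀ ξ, ∫⁻ y, Z ξ y = c0 := fun ξ => lint_sub_left (fun x => ENNReal.ofReal (ζ x)) _
  have hr0 : r ≠ 0 := by positivity
  have key : ∀ ξ, (∫⁻ y, Z ξ y * G y) ^ r ≤ c0 ^ (r - 1) * ∫⁻ y, Z ξ y * G y ^ r := by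
    intro ξ
    rcases eq_or_lt_of_le hr with h1 | h1
    · simp [← h1]
    · set s : ℝ := Real.conjExponent r with hs
      have hpq : s.HolderConjugate r := (Real.HolderConjugate.conjExponent h1).symm
      have hs0 : s ≠ 0 := hpq.ne_zero
      have hs1 : 1/s = 1 - 1/r := by
        have := hpq.inv_add_inv_eq_one
        rw [one_div, one_div]; linarith
      have h1s : (0:ℝ) ≤ 1/s := hpq.one_div_nonneg
      have h1r : (0:ℝ) ≤ 1/r := by positivity
      have hfg : ∀ y, Z ξ y * G y = Z ξ y ^ (1/s) * (Z ξ y ^ (1/r) * G y) := by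
        intro y
        rw [← mul_assoc, ← ENNReal.rpow_add_of_nonneg _ _ h1s h1r,
          hs1, sub_add_cancel, ENNReal.rpow_one]
      have hH := ENNReal.lintegral_mul_le_Lp_mul_Lq (volume) hpq
        (f := fun y => Z ξ y ^ (1/s)) (g := fun y => Z ξ y ^ (1/r) * G y)
        ((hZm ξ).pow_const _).aemeasurable
        (((hZm ξ).pow_const _).mul hG).aemeasurable
      have e1 : ∀ y, (Z ξ y ^ (1/s)) ^ s = Z ξ y := fun y => by
        rw [← ENNReal.rpow_mul, one_div, inv_mul_cancel₀ hs0, ENNReal.rpow_one]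
      have e2 : ∀ y, (Z ξ y ^ (1/r) * G y) ^ r = Z ξ y * G y ^ r := fun y => by
        rw [ENNReal.mul_rpow_of_nonneg _ _ (by positivity), ← ENNReal.rpow_mul,
          one_div, inv_mul_cancel₀ hr0, ENNReal.rpow_one]
      simp only [Pi.mul_apply, e1, e2] at hH
      have hH2 : ∫⁻ y, Z ξ y * G y
          ≤ (∫⁻ y, Z ξ y) ^ (1/s) * (∫⁻ y, Z ξ y * G y ^ r) ^ (1/r) := by
        calc ∫⁻ y, Z ξ y * G y = ∫⁻ y, Z ξ y ^ (1/s) * (Z ξ y ^ (1/r) * G y) := by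
              simp_rw [hfg]
          _ ≤ _ := hH
      calc (∫⁻ y, Z ξ y * G y) ^ r
          ≤ ((∫⁻ y, Z ξ y) ^ (1/s) * (∫⁻ y, Z ξ y * G y ^ r) ^ (1/r)) ^ r :=
            ENNReal.rpow_le_rpow hH2 (by positivity)
        _ = c0 ^ (r - 1) * ∫⁻ y, Z ξ y * G y ^ r := by
            rw [ENNReal.mul_rpow_of_nonneg _ _ (by positivity), ← ENNReal.rpow_mul,
              ← ENNReal.rpow_mul, hZint ξ, hs1]
            congr 2
            · field_simp
            · rw [one_div, inv_mul_cancel₀ hr0, ENNReal.rpow_one]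
  calc ∑' ξ : Fin d → ℤ, (∫⁻ y, Z ξ y * G y) ^ r
      ≤ ∑' ξ : Fin d → ℤ, c0 ^ (r - 1) * ∫⁻ y, Z ξ y * G y ^ r := ENNReal.tsum_le_tsum key
    _ = c0 ^ (r - 1) * ∑' ξ : Fin d → ℤ, ∫⁻ y, Z ξ y * G y ^ r := ENNReal.tsum_mul_left
    _ = c0 ^ (r - 1) * ∫⁻ y, ∑' ξ : Fin d → ℤ, Z ξ y * G y ^ r := by
        rw [lintegral_tsum (f := fun ξ y => Z ξ y * G y ^ r) fun ξ => ((hZm ξ).mul (hG.pow_const _)).aemeasurable]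
    _ = c0 ^ (r - 1) * ∫⁻ y, G y ^ r := by
        congr 1
        refine lintegral_congr fun y => ?_
        rw [ENNReal.tsum_mul_right, hZsum y, one_mul]

private lemma G_pow {H : (Fin d → ℝ) → ℝ≥0∞} (hH : Measurable H) (a : Fin d → ℝ)
    {r : ℝ} (hr : 1 ≤ r) :
    ∫⁻ y, (∫⁻ t in Set.Icc (0:ℝ) 1, H (y + t • a)) ^ r ≤ ∫⁻ z, H z ^ r := by
  have hm : Measurable fun q : (Fin d → ℝ) × ℝ => H (q.1 + q.2 • a) :=
    hH.comp ((continuous_fst.add (continuous_snd.smul continuous_const)).measurable)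
  calc ∫⁻ y, (∫⁻ t in Set.Icc (0:ℝ) 1, H (y + t • a)) ^ r
      ≤ ∫⁻ y, ∫⁻ t in Set.Icc (0:ℝ) 1, H (y + t • a) ^ r := by
        refine lintegral_mono fun y => jensen_prob icc_prob ?_ hr
        exact (hH.comp (measurable_const.add (measurable_id.smul_const a))).aemeasurable
    _ = ∫⁻ t in Set.Icc (0:ℝ) 1, ∫⁻ y, H (y + t • a) ^ r :=
        lintegral_lintegral_swap ((hm.pow_const r).aemeasurable)
    _ = ∫⁻ t in Set.Icc (0:ℝ) 1, ∫⁻ z, H z ^ r := by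
        refine lintegral_congr fun t => ?_
        exact lintegral_add_right_eq_self (fun z => H z ^ r) (t • a)
    _ = ∫⁻ z, H z ^ r := by
        rw [setLIntegral_const, Real.volume_Icc]; norm_num

private lemma conv_top (ζ : (Fin d → ℝ) → ℝ) (hζcont : Continuous ζ)
    {H : (Fin d → ℝ) → ℝ≥0∞} (hH : Measurable H) (a b : Fin d → ℝ) :
    ∫⁻ y, ENNReal.ofReal (ζ (b - y)) * ∫⁻ t in Set.Icc (0:ℝ) 1, H (y + t • a)
      ≤ (∫⁻ x, ENNReal.ofReal (ζ x)) * essSup H volume := by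
  set S := essSup H volume with hS
  set Z : (Fin d → ℝ) → ℝ≥0∞ := fun y => ENNReal.ofReal (ζ (b - y)) with hZdef
  have hZm : Measurable Z :=
    ENNReal.measurable_ofReal.comp (hζcont.comp (continuous_const.sub continuous_id)).measurable
  have hZint : ∫⁻ y, Z y = ∫⁻ x, ENNReal.ofReal (ζ x) := by
    simpa using lint_sub_left (fun x => ENNReal.ofReal (ζ x)) b
  have hm : Measurable fun q : (Fin d → ℝ) × ℝ => Z q.1 * H (q.1 + q.2 • a) :=
    (hZm.comp measurable_fst).mul
      (hH.comp ((continuous_fst.add (continuous_snd.smul continuous_const)).measurable))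
  calc ∫⁻ y, Z y * ∫⁻ t in Set.Icc (0:ℝ) 1, H (y + t • a)
      = ∫⁻ y, ∫⁻ t in Set.Icc (0:ℝ) 1, Z y * H (y + t • a) := by
        refine lintegral_congr fun y => ?_
        exact (lintegral_const_mul' _ _ ENNReal.ofReal_ne_top).symm
    _ = ∫⁻ t in Set.Icc (0:ℝ) 1, ∫⁻ y, Z y * H (y + t • a) :=
        lintegral_lintegral_swap hm.aemeasurable
    _ ≤ ∫⁻ t in Set.Icc (0:ℝ) 1, ∫⁻ y, Z y * S := by
        refine lintegral_mono fun t => ?_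
        refine lintegral_mono_ae ?_
        have hae : ∀ᵐ z ∂(volume : Measure (Fin d → ℝ)), H z ≤ S := ae_le_essSup H
        have hmap : ∀ᵐ y ∂(volume : Measure (Fin d → ℝ)), H (y + t • a) ≤ S := by
          rw [ae_iff] at hae ⊢
          have : {y : Fin d → ℝ | ¬H (y + t • a) ≤ S}
              = (fun y => y + t • a) ⁻¹' {z | ¬H z ≤ S} := rfl
          rw [this, measure_preimage_add_right]
          exact hae
        filter_upwards [hmap] with y hy using mul_le_mul_right hy _
    _ = (∫⁻ x, ENNReal.ofReal (ζ x)) * S := by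
        rw [lintegral_mul_const _ hZm, hZint, setLIntegral_const, Real.volume_Icc]
        norm_num

private lemma D_bound (ζ : (Fin d → ℝ) → ℝ) (hζ0 : ∀ x, 0 ≤ ζ x)
    (hζc : HasCompactSupport ζ) (hζcont : Continuous ζ)
    (u : (Fin d → ℝ) → (Fin d → ℝ)) (hu : Differentiable ℝ u) (c a : Fin d → ℝ) :
    (‖(∫ y, ζ (c + a - y) • u y) - ∫ y, ζ (c - y) • u y‖₊ : ℝ≥0∞)
      ≤ ↑‖a‖₊ * ∫⁻ y, ENNReal.ofReal (ζ (c - y)) *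
          ∫⁻ t in Set.Icc (0:ℝ) 1, (‖fderiv ℝ u (y + t • a)‖₊ : ℝ≥0∞) := by
  have hucont : Continuous u := hu.continuous
  have hker : ∀ b : Fin d → ℝ, HasCompactSupport (fun y : Fin d → ℝ => ζ (b - y)) := by
    intro b
    have : (fun y : Fin d → ℝ => ζ (b - y)) = ζ ∘ (Homeomorph.subLeft b) := rfl
    rw [this]
    exact hζc.comp_homeomorph _
  have hint : ∀ (b : Fin d → ℝ) (w : (Fin d → ℝ) → (Fin d → ℝ)), Continuous w →
      Integrable (fun y => ζ (b - y) • w y) volume := by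
    intro b w hw
    refine Continuous.integrable_of_hasCompactSupport ?_ ?_
    · exact (hζcont.comp (continuous_const.sub continuous_id)).smul hw
    · exact (hker b).smul_right
  have h1 : (∫ y, ζ (c + a - y) • u y) = ∫ y, ζ (c - y) • u (y + a) := by
    rw [← integral_add_right_eq_self (fun y => ζ (c + a - y) • u y) a]
    congr 1
    funext y
    congr 2
    abel
  have h2 : (∫ y, ζ (c + a - y) • u y) - (∫ y, ζ (c - y) • u y)
      = ∫ y, ζ (c - y) • (u (y + a) - u y) := by
    rw [h1, ← integral_sub (hint c (fun y => u (y + a))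
      (hucont.comp (continuous_id.add continuous_const))) (hint c u hucont)]
    simp [smul_sub]
  rw [h2]
  calc (‖∫ y, ζ (c - y) • (u (y + a) - u y)‖₊ : ℝ≥0∞)
      ≤ ∫⁻ y, ‖ζ (c - y) • (u (y + a) - u y)‖₊ :=
        enorm_integral_le_lintegral_enorm _
    _ = ∫⁻ y, ENNReal.ofReal (ζ (c - y)) * ‖u (y + a) - u y‖₊ := by
        refine lintegral_congr fun y => ?_
        rw [nnnorm_smul, ENNReal.coe_mul, ← enorm_eq_nnnorm, Real.enorm_eq_ofReal (hζ0 _)]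
    _ ≤ ∫⁻ y, ENNReal.ofReal (ζ (c - y)) *
          ∫⁻ t in Set.Icc (0:ℝ) 1, (‖fderiv ℝ u (y + t • a)‖₊ : ℝ≥0∞) * ‖a‖₊ := by
        refine lintegral_mono fun y => mul_le_mul_right (key1 u hu y a) _
    _ = ↑‖a‖₊ * ∫⁻ y, ENNReal.ofReal (ζ (c - y)) *
          ∫⁻ t in Set.Icc (0:ℝ) 1, (‖fderiv ℝ u (y + t • a)‖₊ : ℝ≥0∞) := by
        rw [← lintegral_const_mul' _ _ ENNReal.coe_ne_top]
        refine lintegral_congr fun y => ?_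
        rw [lintegral_mul_const' _ _ ENNReal.coe_ne_top]
        ring

end Aux

/-- **Summed multilinear bound (Lemma on variation bounds).** Let `W ξ ρ` be `j`-linear
forms (the derivatives `V_ρ(g_ξ)`) with `‖W ξ ρ‖ ∏ᵢ|ρᵢ| ≤ m(ρ)` and `m` summable
(`M^{(j)} = ∑ m < ∞`).  Then for displacements `v i` whose quasi-interpolants are tested
through the finite differences `D_ρ ṽ(ξ)`, and Hölder-conjugate exponents `∑ 1/pᵢ = 1`,
`∑_ξ ∑_ρ |V_ρ(g_ξ)[D_ρ v(ξ)]| ≤ C M^{(j)} ∏ᵢ ‖∇vᵢ‖_{L^{pᵢ}}`, with `C` independent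
of `V` (i.e. of `W`, `m`) and of the `vᵢ`. -/
theorem stmt_10 {d : ℕ} (j : ℕ) (hj : 1 ≤ j)
    (ζ : (Fin d → ℝ) → ℝ) (hζ0 : ∀ x, 0 ≤ ζ x) (hζc : HasCompactSupport ζ)
    (hζcont : Continuous ζ)
    (hpart : ∀ x : Fin d → ℝ, ∑' ξ : Fin d → ℤ, ζ (x - toR ξ) = 1)
    (p : Fin j → ℝ≥0∞) (hp : ∀ i, 1 ≤ p i) (hps : ∑ i, (p i)⁻¹ = 1) :
    ∃ C : ℝ, 0 < C ∧
      ∀ (W : (Fin d → ℤ) → (Fin j → {ρ : Fin d → ℤ // ρ ≠ 0}) →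
            ContinuousMultilinearMap ℝ (fun _ : Fin j => (Fin d → ℝ)) ℝ)
        (m : (Fin j → {ρ : Fin d → ℤ // ρ ≠ 0}) → ℝ),
        (∀ ξ ρ, ‖W ξ ρ‖ * ∏ i, ‖toR (ρ i).1‖ ≤ m ρ) → Summable m →
        ∀ v : Fin j → ((Fin d → ℝ) → (Fin d → ℝ)), (∀ i, Differentiable ℝ (v i)) →
        ∑' (ξ : Fin d → ℤ) (ρ : Fin j → {ρ : Fin d → ℤ // ρ ≠ 0}),
            (‖W ξ ρ (fun i =>
                (∫ y, ζ (toR ξ + toR (ρ i).1 - y) • v i y)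
                  - (∫ y, ζ (toR ξ - y) • v i y))‖₊ : ℝ≥0∞)
          ≤ ENNReal.ofReal (C * (∑' ρ, m ρ))
              * ∏ i, eLpNorm (fun x => fderiv ℝ (v i) x) (p i) volume := by
  classical
  -- partition of unity facts
  have hsummable : ∀ x : Fin d → ℝ, Summable fun ξ : Fin d → ℤ => ζ (x - toR ξ) := by
    intro x
    by_contra h
    have h0 := tsum_eq_zero_of_not_summable h
    rw [hpart x] at h0
    exact one_ne_zero h0
  have toR_neg : ∀ ξ : Fin d → ℤ, toR (-ξ) = -toR ξ := by
    intro ξ; funext i; simp [toR]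
  have hZsum : ∀ y : Fin d → ℝ, ∑' ξ : Fin d → ℤ, ENNReal.ofReal (ζ (toR ξ - y)) = 1 := by
    intro y
    have h2 : ∑' ξ : Fin d → ℤ, ENNReal.ofReal (ζ ((-y) - toR ξ)) = 1 := by
      rw [← ENNReal.ofReal_tsum_of_nonneg (fun ξ => hζ0 _) (hsummable (-y)), hpart (-y)]
      exact ENNReal.ofReal_one
    calc ∑' ξ : Fin d → ℤ, ENNReal.ofReal (ζ (toR ξ - y))
        = ∑' ξ : Fin d → ℤ, ENNReal.ofReal (ζ ((-y) - toR ξ)) := by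
          rw [← (Equiv.neg (Fin d → ℤ)).tsum_eq
            (fun ξ => ENNReal.ofReal (ζ ((-y) - toR ξ)))]
          refine tsum_congr fun ξ => ?_
          congr 2
          show toR ξ - y = -y - toR (-ξ)
          rw [toR_neg]; abel
      _ = 1 := h2
  -- constants
  set c0 : ℝ≥0∞ := ∫⁻ x, ENNReal.ofReal (ζ x) with hc0def
  have hc0top : c0 ≠ ∞ := by
    have hζint : Integrable ζ volume := hζcont.integrable_of_hasCompactSupport hζc
    have h2 := hζint.2
    rw [HasFiniteIntegral] at h2
    have : c0 = ∫⁻ x, (‖ζ x‖₊ : ℝ≥0∞) := by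
      refine lintegral_congr fun x => ?_
      rw [← enorm_eq_nnnorm, Real.enorm_eq_ofReal (hζ0 x)]
    rw [this]
    exact h2.ne
  set c1 : ℝ≥0∞ := max 1 c0 with hc1def
  have hc1top : c1 ≠ ∞ := by simp [hc1def, hc0top]
  have hc11 : 1 ≤ c1 := le_max_left _ _
  have hc1pos : c1 ≠ 0 := by
    intro h; rw [h] at hc11; exact (not_le.mpr zero_lt_one) hc11
  refine ⟨c1.toReal ^ j, pow_pos (ENNReal.toReal_pos hc1pos hc1top) j, ?_⟩
  intro W m hm hsm v hv
  -- local notation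
  have hH : ∀ i : Fin j, Measurable fun z : Fin d → ℝ => (‖fderiv ℝ (v i) z‖₊ : ℝ≥0∞) :=
    fun i => (measurable_fderiv ℝ (v i)).enorm
  set N : Fin j → ℝ≥0∞ := fun i => eLpNorm (fun x => fderiv ℝ (v i) x) (p i) volume with hNdef
  have hp0 : ∀ i, p i ≠ 0 := fun i => (lt_of_lt_of_le zero_lt_one (hp i)).ne'
  have hN : ∀ i : Fin j, p i ≠ ∞ → N i
      = (∫⁻ z, (‖fderiv ℝ (v i) z‖₊ : ℝ≥0∞) ^ (p i).toReal) ^ (1/(p i).toReal) := by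
    intro i hpi
    simp only [hNdef]
    exact eLpNorm_eq_lintegral_rpow_enorm_toReal (hp0 i) hpi
  have hNtop : ∀ i : Fin j, p i = ∞ → N i
      = essSup (fun z => (‖fderiv ℝ (v i) z‖₊ : ℝ≥0∞)) volume := by
    intro i hpi
    simp only [hNdef, hpi, eLpNorm_exponent_top]
    rfl
  set D : Fin j → {ρ : Fin d → ℤ // ρ ≠ 0} → (Fin d → ℤ) → (Fin d → ℝ) := fun i σ ξ =>
    (∫ y, ζ (toR ξ + toR σ.1 - y) • v i y) - ∫ y, ζ (toR ξ - y) • v i y with hDdef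
  set K : Fin j → {ρ : Fin d → ℤ // ρ ≠ 0} → (Fin d → ℤ) → ℝ≥0∞ := fun i σ ξ =>
    ∫⁻ y, ENNReal.ofReal (ζ (toR ξ - y)) *
      ∫⁻ t in Set.Icc (0:ℝ) 1, (‖fderiv ℝ (v i) (y + t • toR σ.1)‖₊ : ℝ≥0∞) with hKdef
  have hD : ∀ i σ ξ, (‖D i σ ξ‖₊ : ℝ≥0∞) ≤ ↑‖toR σ.1‖₊ * K i σ ξ := fun i σ ξ =>
    D_bound ζ hζ0 hζc hζcont (v i) (hv i) (toR ξ) (toR σ.1)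
  have hGm : ∀ (i : Fin j) (a : Fin d → ℝ), Measurable fun y : Fin d → ℝ =>
      ∫⁻ t in Set.Icc (0:ℝ) 1, (‖fderiv ℝ (v i) (y + t • a)‖₊ : ℝ≥0∞) := by
    intro i a
    exact Measurable.lintegral_prod_right'
      ((hH i).comp ((continuous_fst.add (continuous_snd.smul continuous_const)).measurable))
  have hr1 : ∀ i : Fin j, p i ≠ ∞ → 1 ≤ (p i).toReal := by
    intro i hi
    rw [← ENNReal.toReal_one]
    exact ENNReal.toReal_mono hi (hp i)
  -- the finite-exponent bound
  have hfin : ∀ i : Fin j, p i ≠ ∞ → ∀ σ : {ρ : Fin d → ℤ // ρ ≠ 0},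
      (∑' ξ : Fin d → ℤ, (‖D i σ ξ‖₊ : ℝ≥0∞) ^ (p i).toReal) ^ (1/(p i).toReal)
        ≤ ↑‖toR σ.1‖₊ * (c1 * N i) := by
    intro i hpi σ
    set r := (p i).toReal with hrdef
    have hr : 1 ≤ r := hr1 i hpi
    have hr0 : r ≠ 0 := by positivity
    have hrn : (0:ℝ) ≤ r := by positivity
    have h1r : (0:ℝ) ≤ 1/r := by positivity
    have step1 : ∑' ξ : Fin d → ℤ, (‖D i σ ξ‖₊ : ℝ≥0∞) ^ r
        ≤ (↑‖toR σ.1‖₊ : ℝ≥0∞)^r * (c0 ^ (r-1) *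
            ∫⁻ z, (‖fderiv ℝ (v i) z‖₊ : ℝ≥0∞) ^ r) := by
      calc ∑' ξ : Fin d → ℤ, (‖D i σ ξ‖₊ : ℝ≥0∞) ^ r
          ≤ ∑' ξ : Fin d → ℤ, (↑‖toR σ.1‖₊ * K i σ ξ) ^ r :=
            ENNReal.tsum_le_tsum fun ξ => ENNReal.rpow_le_rpow (hD i σ ξ) hrn
        _ = (↑‖toR σ.1‖₊ : ℝ≥0∞)^r * ∑' ξ : Fin d → ℤ, K i σ ξ ^ r := by
            simp_rw [ENNReal.mul_rpow_of_nonneg _ _ hrn]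
            exact ENNReal.tsum_mul_left
        _ ≤ (↑‖toR σ.1‖₊ : ℝ≥0∞)^r * (c0 ^ (r-1) * ∫⁻ y,
              (∫⁻ t in Set.Icc (0:ℝ) 1,
                (‖fderiv ℝ (v i) (y + t • toR σ.1)‖₊ : ℝ≥0∞)) ^ r) :=
            mul_le_mul_right (conv_lp ζ hζcont hZsum (hGm i _) hr) _
        _ ≤ _ := mul_le_mul_right (mul_le_mul_right (G_pow (hH i) _ hr) _) _
    calc (∑' ξ : Fin d → ℤ, (‖D i σ ξ‖₊:ℝ≥0∞) ^ r) ^ (1/r)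
        ≤ ((↑‖toR σ.1‖₊ : ℝ≥0∞)^r * (c0 ^ (r-1) *
            ∫⁻ z, (‖fderiv ℝ (v i) z‖₊ : ℝ≥0∞) ^ r)) ^ (1/r) :=
          ENNReal.rpow_le_rpow step1 h1r
      _ = ↑‖toR σ.1‖₊ * (c0 ^ ((r-1)*(1/r)) *
            (∫⁻ z, (‖fderiv ℝ (v i) z‖₊ : ℝ≥0∞) ^ r) ^ (1/r)) := by
          rw [ENNReal.mul_rpow_of_nonneg _ _ h1r, ENNReal.mul_rpow_of_nonneg _ _ h1r,
            ← ENNReal.rpow_mul, ← ENNReal.rpow_mul, mul_one_div, div_self hr0,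
            ENNReal.rpow_one]
      _ ≤ ↑‖toR σ.1‖₊ * (c1 * N i) := by
          refine mul_le_mul_right (mul_le_mul ?_ ?_ zero_le zero_le) _
          · rcases le_total c0 1 with h | h
            · refine le_trans (ENNReal.rpow_le_rpow h (mul_nonneg (by linarith) h1r)) ?_
              rw [ENNReal.one_rpow]
              exact le_max_left _ _
            · refine le_trans ?_ (le_max_right _ _)
              calc c0 ^ ((r-1)*(1/r)) ≤ c0 ^ (1:ℝ) := by
                    refine ENNReal.rpow_le_rpow_of_exponent_le h ?_
                    rw [mul_one_div]
                    rw [div_le_one (lt_of_lt_of_le zero_lt_one hr)]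
                    linarith
                _ = c0 := ENNReal.rpow_one c0
          · rw [hN i hpi, ← hrdef]
  -- the infinite-exponent bound
  have htop : ∀ i : Fin j, p i = ∞ → ∀ σ ξ,
      (‖D i σ ξ‖₊:ℝ≥0∞) ≤ ↑‖toR σ.1‖₊ * (c1 * N i) := by
    intro i hpi σ ξ
    refine le_trans (hD i σ ξ) (mul_le_mul_right ?_ _)
    calc K i σ ξ
        ≤ c0 * essSup (fun z => (‖fderiv ℝ (v i) z‖₊ : ℝ≥0∞)) volume :=
          conv_top ζ hζcont (hH i) _ _
      _ ≤ c1 * N i := by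
          refine mul_le_mul (le_max_right _ _) ?_ zero_le zero_le
          rw [hNtop i hpi]
  -- exponent bookkeeping
  set S : Finset (Fin j) := Finset.univ.filter (fun i => p i ≠ ∞) with hSdef
  have hmemS : ∀ i : Fin j, i ∈ S ↔ p i ≠ ∞ := by
    intro i; simp [hSdef]
  have hinvtop : ∀ i, (p i)⁻¹ ≠ ∞ := by
    intro i
    simp only [ne_eq, ENNReal.inv_eq_top]
    exact hp0 i
  have hsum_e : ∑ i ∈ S, 1/(p i).toReal = 1 := by
    have h1 : (∑ i, (p i)⁻¹).toReal = 1 := by rw [hps]; exact ENNReal.toReal_one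
    rw [ENNReal.toReal_sum (fun i _ => hinvtop i)] at h1
    have h2 : ∑ i ∈ Finset.univ.filter (fun i => ¬ p i ≠ ∞), ((p i)⁻¹).toReal = 0 := by
      refine Finset.sum_eq_zero fun i hi => ?_
      simp only [Finset.mem_filter, not_not] at hi
      rw [hi.2]
      simp
    have h4 := Finset.sum_filter_add_sum_filter_not Finset.univ (fun i => p i ≠ ∞)
      (fun i => ((p i)⁻¹).toReal)
    rw [h2, add_zero] at h4
    calc ∑ i ∈ S, 1/(p i).toReal
        = ∑ i ∈ S, ((p i)⁻¹).toReal := by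
          refine Finset.sum_congr rfl fun i hi => ?_
          rw [ENNReal.toReal_inv, one_div]
      _ = ∑ i, ((p i)⁻¹).toReal := h4
      _ = 1 := h1
  -- the Hoelder product bound
  have hprod : ∀ ρ : Fin j → {ρ : Fin d → ℤ // ρ ≠ 0},
      (∑' ξ : Fin d → ℤ, ∏ i, (‖D i (ρ i) ξ‖₊ : ℝ≥0∞))
        ≤ (∏ i, (‖toR (ρ i).1‖₊ : ℝ≥0∞)) * (c1 ^ j * ∏ i, N i) := by
    intro ρ
    set B : Fin j → ℝ≥0∞ := fun i => ↑‖toR (ρ i).1‖₊ * (c1 * N i) with hBdef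
    set F : Fin j → (Fin d → ℤ) → ℝ≥0∞ := fun i ξ => (‖D i (ρ i) ξ‖₊ : ℝ≥0∞) with hFdef
    have hhold : ∑' ξ : Fin d → ℤ, ∏ i ∈ S, F i ξ ≤ ∏ i ∈ S, B i := by
      calc ∑' ξ : Fin d → ℤ, ∏ i ∈ S, F i ξ
          = ∫⁻ ξ, ∏ i ∈ S, (F i ξ ^ (p i).toReal) ^ (1/(p i).toReal) ∂Measure.count := by
            rw [lintegral_count]
            refine tsum_congr fun ξ => Finset.prod_congr rfl fun i hi => ?_
            have hri := hr1 i ((hmemS i).mp hi)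
            rw [← ENNReal.rpow_mul, mul_one_div,
              div_self (ne_of_gt (lt_of_lt_of_le zero_lt_one hri)), ENNReal.rpow_one]
          _ ≤ ∏ i ∈ S, (∫⁻ ξ, F i ξ ^ (p i).toReal ∂Measure.count) ^ (1/(p i).toReal) :=
            ENNReal.lintegral_prod_norm_pow_le S
              (fun i _ => (measurable_of_countable _).aemeasurable) hsum_e
              (fun i _ => by positivity)
          _ = ∏ i ∈ S, (∑' ξ : Fin d → ℤ, F i ξ ^ (p i).toReal) ^ (1/(p i).toReal) := by
            refine Finset.prod_congr rfl fun i _ => ?_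
            rw [lintegral_count]
          _ ≤ ∏ i ∈ S, B i :=
            Finset.prod_le_prod' fun i hi => hfin i ((hmemS i).mp hi) (ρ i)
    have hmain : ∑' ξ : Fin d → ℤ, ∏ i, F i ξ ≤ ∏ i, B i := by
      calc ∑' ξ : Fin d → ℤ, ∏ i, F i ξ
          = ∑' ξ : Fin d → ℤ, (∏ i ∈ S, F i ξ) * ∏ i ∈ Finset.univ.filter (fun i => ¬ p i ≠ ∞), F i ξ := by
            refine tsum_congr fun ξ => ?_
            rw [Finset.prod_filter_mul_prod_filter_not]
        _ ≤ ∑' ξ : Fin d → ℤ, (∏ i ∈ S, F i ξ) * ∏ i ∈ Finset.univ.filter (fun i => ¬ p i ≠ ∞), B i := by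
            refine ENNReal.tsum_le_tsum fun ξ => mul_le_mul_right ?_ _
            refine Finset.prod_le_prod' fun i hi => ?_
            simp only [Finset.mem_filter, not_not] at hi
            exact htop i hi.2 (ρ i) ξ
        _ = (∏ i ∈ Finset.univ.filter (fun i => ¬ p i ≠ ∞), B i) * ∑' ξ : Fin d → ℤ, ∏ i ∈ S, F i ξ := by
            rw [← ENNReal.tsum_mul_left]
            refine tsum_congr fun ξ => mul_comm _ _
        _ ≤ (∏ i ∈ Finset.univ.filter (fun i => ¬ p i ≠ ∞), B i) * ∏ i ∈ S, B i :=
            mul_le_mul_right hhold _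
        _ = ∏ i, B i := by
            rw [mul_comm, Finset.prod_filter_mul_prod_filter_not]
    refine le_trans hmain (le_of_eq ?_)
    rw [hBdef]
    rw [Finset.prod_mul_distrib]
    congr 1
    rw [Finset.prod_mul_distrib, Finset.prod_const, Finset.card_univ, Fintype.card_fin]
  -- nonvanishing of the norm products
  have hP0 : ∀ ρ : Fin j → {ρ : Fin d → ℤ // ρ ≠ 0},
      (∏ i, (‖toR (ρ i).1‖₊ : ℝ≥0∞)) ≠ 0 := by
    intro ρ
    rw [Finset.prod_ne_zero_iff]
    intro i _
    simp only [ne_eq, ENNReal.coe_eq_zero, nnnorm_eq_zero]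
    intro h
    refine (ρ i).2 (funext fun k => ?_)
    have := congrFun h k
    simpa [toR] using this
  have hPtop : ∀ ρ : Fin j → {ρ : Fin d → ℤ // ρ ≠ 0},
      (∏ i, (‖toR (ρ i).1‖₊ : ℝ≥0∞)) ≠ ∞ :=
    fun ρ => (ENNReal.prod_lt_top fun i _ => ENNReal.coe_lt_top).ne
  -- pointwise multilinear bound
  have hm0 : ∀ ρ, 0 ≤ m ρ := fun ρ =>
    le_trans (mul_nonneg (norm_nonneg _) (Finset.prod_nonneg fun i _ => norm_nonneg _))
      (hm 0 ρ)
  have hpt : ∀ (ξ : Fin d → ℤ) (ρ : Fin j → {ρ : Fin d → ℤ // ρ ≠ 0}),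
      (‖W ξ ρ (fun i => D i (ρ i) ξ)‖₊ : ℝ≥0∞)
        ≤ (ENNReal.ofReal (m ρ) / ∏ i, (‖toR (ρ i).1‖₊ : ℝ≥0∞))
            * ∏ i, (‖D i (ρ i) ξ‖₊ : ℝ≥0∞) := by
    intro ξ ρ
    have h1 : (‖W ξ ρ (fun i => D i (ρ i) ξ)‖₊ : ℝ≥0∞)
        ≤ ↑‖W ξ ρ‖₊ * ∏ i, (‖D i (ρ i) ξ‖₊ : ℝ≥0∞) := by
      have h := (W ξ ρ).le_opNNNorm (fun i => D i (ρ i) ξ)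
      have h' := ENNReal.coe_le_coe.mpr h
      rwa [ENNReal.coe_mul, ENNReal.coe_finset_prod] at h'
    have h2 : (↑‖W ξ ρ‖₊ : ℝ≥0∞) * ∏ i, (‖toR (ρ i).1‖₊ : ℝ≥0∞)
        ≤ ENNReal.ofReal (m ρ) := by
      have h := ENNReal.ofReal_le_ofReal (hm ξ ρ)
      rw [ENNReal.ofReal_mul (norm_nonneg _), ofReal_norm,
        ENNReal.ofReal_prod_of_nonneg (fun i _ => norm_nonneg _)] at h
      simpa only [ofReal_norm, enorm_eq_nnnorm] using h
    have h3 : (↑‖W ξ ρ‖₊ : ℝ≥0∞) ≤ ENNReal.ofReal (m ρ) / ∏ i, (‖toR (ρ i).1‖₊ : ℝ≥0∞) :=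
      (ENNReal.le_div_iff_mul_le (Or.inl (hP0 ρ)) (Or.inl (hPtop ρ))).mpr h2
    exact le_trans h1 (mul_le_mul_left h3 _)
  -- assembling
  calc ∑' (ξ : Fin d → ℤ) (ρ : Fin j → {ρ : Fin d → ℤ // ρ ≠ 0}),
        (‖W ξ ρ (fun i =>
            (∫ y, ζ (toR ξ + toR (ρ i).1 - y) • v i y)
              - (∫ y, ζ (toR ξ - y) • v i y))‖₊ : ℝ≥0∞)
      = ∑' (ρ : Fin j → {ρ : Fin d → ℤ // ρ ≠ 0}) (ξ : Fin d → ℤ),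
          (‖W ξ ρ (fun i => D i (ρ i) ξ)‖₊ : ℝ≥0∞) := ENNReal.tsum_comm
    _ ≤ ∑' (ρ : Fin j → {ρ : Fin d → ℤ // ρ ≠ 0}),
          ENNReal.ofReal (m ρ) * (c1 ^ j * ∏ i, N i) := by
        refine ENNReal.tsum_le_tsum fun ρ => ?_
        calc ∑' ξ : Fin d → ℤ, (‖W ξ ρ (fun i => D i (ρ i) ξ)‖₊ : ℝ≥0∞)
            ≤ ∑' ξ : Fin d → ℤ,
                (ENNReal.ofReal (m ρ) / ∏ i, (‖toR (ρ i).1‖₊ : ℝ≥0∞))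
                  * ∏ i, (‖D i (ρ i) ξ‖₊ : ℝ≥0∞) :=
              ENNReal.tsum_le_tsum fun ξ => hpt ξ ρ
          _ = (ENNReal.ofReal (m ρ) / ∏ i, (‖toR (ρ i).1‖₊ : ℝ≥0∞))
                * ∑' ξ : Fin d → ℤ, ∏ i, (‖D i (ρ i) ξ‖₊ : ℝ≥0∞) := ENNReal.tsum_mul_left
          _ ≤ (ENNReal.ofReal (m ρ) / ∏ i, (‖toR (ρ i).1‖₊ : ℝ≥0∞))
                * ((∏ i, (‖toR (ρ i).1‖₊ : ℝ≥0∞)) * (c1 ^ j * ∏ i, N i)) :=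
              mul_le_mul_right (hprod ρ) _
          _ = ENNReal.ofReal (m ρ) * (c1 ^ j * ∏ i, N i) := by
              rw [← mul_assoc, ENNReal.div_mul_cancel (hP0 ρ) (hPtop ρ)]
    _ = (∑' ρ : Fin j → {ρ : Fin d → ℤ // ρ ≠ 0}, ENNReal.ofReal (m ρ))
          * (c1 ^ j * ∏ i, N i) := ENNReal.tsum_mul_right
    _ = ENNReal.ofReal (∑' ρ, m ρ) * (c1 ^ j * ∏ i, N i) := by
        rw [ENNReal.ofReal_tsum_of_nonneg hm0 hsm]
    _ = ENNReal.ofReal (c1.toReal ^ j * ∑' ρ, m ρ) * ∏ i, N i := by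
        rw [ENNReal.ofReal_mul (by positivity), ENNReal.ofReal_pow ENNReal.toReal_nonneg,
          ENNReal.ofReal_toReal hc1top]
        ring
end

section
/- (Instability example.) Consider the 1D harmonic chain with energy E^a(u) = ∑_{ξ∈ℤ} ( (a₁/2)|u'_ξ|² + (a₂/2)|u'_ξ + u'_{ξ+1}|² ), where u'_ξ = u(ξ) − u(ξ−1). Then by the parallelogram identity, E^a(u) = ∑_{ξ∈ℤ} ( ((a₁+4a₂)/2)|u'_ξ|² − (a₂/2)|u''_ξ|² ) with u''_ξ = u(ξ+1) − 2u(ξ) + u(ξ−1), for all compactly supported u : ℤ → ℝ. Consequently, if a₁ = 2, a₂ = −1/4 then E^a(u) ≥ (1/2)∑_ξ |u'_ξ|², whereas if a₁ = −1, a₂ = 1/2 then for each δ > 0 there exists a compactly supported u with ∑|u'_ξ|² = 1 and E^a(u) ≤ −1/2 + δ (the operator δ²E^a(0) has −1 in its spectrum), even though a₁ + 4a₂ = 1 > 0 in both cases. -/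
/-- The energy of the 1D harmonic chain with first- and second-neighbour
interactions, `E^a(u) = ∑_ξ ( (a₁/2)|u'_ξ|² + (a₂/2)|u'_ξ + u'_{ξ+1}|² )`,
where `u'_ξ = u(ξ) - u(ξ-1)`. -/
noncomputable def chainEnergy (a₁ a₂ : ℝ) (u : ℤ → ℝ) : ℝ :=
  ∑' ξ : ℤ, (a₁ / 2 * (u ξ - u (ξ - 1)) ^ 2
    + a₂ / 2 * ((u ξ - u (ξ - 1)) + (u (ξ + 1) - u ξ)) ^ 2)

private lemma summable_aux (u : ℤ → ℝ) (hu : (Function.support u).Finite) (f : ℤ → ℝ)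
    (hf : ∀ ξ, u (ξ-1) = 0 → u ξ = 0 → u (ξ+1) = 0 → f ξ = 0) : Summable f := by
  have hT : ({ξ : ℤ | u (ξ-1) ≠ 0 ∨ u ξ ≠ 0 ∨ u (ξ+1) ≠ 0}).Finite := by
    apply Set.Finite.subset ((hu.image (· + 1)).union (hu.union (hu.image (· - 1))))
    rintro ξ (h | h | h)
    · exact Or.inl ⟨ξ-1, h, by ring⟩
    · exact Or.inr (Or.inl h)
    · exact Or.inr (Or.inr ⟨ξ+1, h, by ring⟩)
  apply summable_of_ne_finset_zero (s := hT.toFinset)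
  intro ξ hξ
  simp only [Set.Finite.mem_toFinset, Set.mem_setOf_eq, not_or, not_not] at hξ
  exact hf ξ hξ.1 hξ.2.1 hξ.2.2

private lemma part1 (a₁ a₂ : ℝ) (u : ℤ → ℝ) (hu : (Function.support u).Finite) :
    chainEnergy a₁ a₂ u
      = ∑' ξ : ℤ, ((a₁ + 4 * a₂) / 2 * (u ξ - u (ξ - 1)) ^ 2
          - a₂ / 2 * (u (ξ + 1) - 2 * u ξ + u (ξ - 1)) ^ 2) := by
  have Sg : Summable (fun ξ : ℤ => (a₁ + 4 * a₂) / 2 * (u ξ - u (ξ - 1)) ^ 2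
      - a₂ / 2 * (u (ξ + 1) - 2 * u ξ + u (ξ - 1)) ^ 2) := by
    apply summable_aux u hu; intro ξ h1 h2 h3; simp [h1, h2, h3]
  have Sh1 : Summable (fun ξ : ℤ => a₂ * (u (ξ + 1) - u ξ) ^ 2) := by
    apply summable_aux u hu; intro ξ h1 h2 h3; simp [h1, h2, h3]
  have Sh2 : Summable (fun ξ : ℤ => a₂ * (u ξ - u (ξ - 1)) ^ 2) := by
    apply summable_aux u hu; intro ξ h1 h2 h3; simp [h1, h2, h3]
  have step1 : chainEnergy a₁ a₂ u
      = ∑' ξ : ℤ, (((a₁ + 4 * a₂) / 2 * (u ξ - u (ξ - 1)) ^ 2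
          - a₂ / 2 * (u (ξ + 1) - 2 * u ξ + u (ξ - 1)) ^ 2)
          + (a₂ * (u (ξ + 1) - u ξ) ^ 2 - a₂ * (u ξ - u (ξ - 1)) ^ 2)) := by
    unfold chainEnergy
    exact tsum_congr fun ξ => by ring
  have hshift : (∑' ξ : ℤ, a₂ * (u (ξ + 1) - u ξ) ^ 2)
      = ∑' ξ : ℤ, a₂ * (u ξ - u (ξ - 1)) ^ 2 := by
    have := (Equiv.addRight (1 : ℤ)).tsum_eq (fun ξ : ℤ => a₂ * (u ξ - u (ξ - 1)) ^ 2)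
    rw [← this]
    apply tsum_congr
    intro ξ
    simp [Equiv.coe_addRight, add_sub_cancel_right]
  rw [step1, Summable.tsum_add Sg (Sh1.sub Sh2), Summable.tsum_sub Sh1 Sh2, hshift, sub_self, add_zero]

private lemma part2 (u : ℤ → ℝ) (hu : (Function.support u).Finite) :
    (1/2 : ℝ) * ∑' ξ : ℤ, (u ξ - u (ξ - 1)) ^ 2 ≤ chainEnergy 2 (-(1/4)) u := by
  rw [part1 2 (-(1/4)) u hu, ← tsum_mul_left]
  apply Summable.tsum_le_tsum
  · intro ξ; nlinarith [sq_nonneg (u (ξ + 1) - 2 * u ξ + u (ξ - 1))]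
  · apply summable_aux u hu; intro ξ h1 h2 h3; simp [h1, h2, h3]
  · apply summable_aux u hu; intro ξ h1 h2 h3; simp [h1, h2, h3]

private lemma part3 (δ : ℝ) (hδ : 0 < δ) : ∃ u : ℤ → ℝ, (Function.support u).Finite ∧
    (∑' ξ : ℤ, (u ξ - u (ξ - 1)) ^ 2) = 1 ∧
    chainEnergy (-1) (1/2) u ≤ -(1/2) + δ := by
  set m : ℕ := ⌈δ⁻¹⌉₊ + 1 with hmdef
  set N : ℤ := 2 * (m : ℤ) with hNdef
  have hm1 : 1 ≤ (m : ℤ) := by simp [hmdef]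
  have hNpos : (0 : ℝ) < (N : ℝ) := by
    have : (0:ℤ) < N := by omega
    exact_mod_cast this
  set c : ℝ := Real.sqrt ((N : ℝ)⁻¹) with hcdef
  have hc2 : c ^ 2 = (N : ℝ)⁻¹ := Real.sq_sqrt (by positivity)
  set u : ℤ → ℝ := fun ξ => if 1 ≤ ξ ∧ ξ ≤ N ∧ ξ % 2 = 1 then -c else 0 with hudef
  set x : ℤ → ℝ := fun ξ =>
    if 1 ≤ ξ ∧ ξ ≤ N then (if ξ % 2 = 0 then c else -c) else 0 with hxdef
  have hx : ∀ ξ : ℤ, u ξ - u (ξ - 1) = x ξ := by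
    intro ξ
    simp only [hudef, hxdef]
    split_ifs <;> first | ring1 | (exfalso; omega)
  have hsupp : (Function.support u).Finite := by
    apply Set.Finite.subset (Set.finite_Icc (1 : ℤ) N)
    intro ξ hξ
    simp only [hudef, Function.mem_support, ne_eq, ite_eq_right_iff, not_forall] at hξ
    exact Set.mem_Icc.mpr ⟨hξ.1.1, hξ.1.2.1⟩
  have hx2 : ∀ ξ : ℤ, x ξ ^ 2 = if 1 ≤ ξ ∧ ξ ≤ N then c ^ 2 else 0 := by
    intro ξ; simp only [hxdef]; split_ifs <;> ring
  have hcardN : ((Finset.Icc (1:ℤ) N).card : ℝ) = (N : ℝ) := by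
    rw [Int.card_Icc]
    have : N + 1 - 1 = N := by ring
    rw [this]
    exact_mod_cast Int.toNat_of_nonneg (by omega)
  have hsum1 : (∑' ξ : ℤ, (u ξ - u (ξ - 1)) ^ 2) = 1 := by
    have h1 : (∑' ξ : ℤ, (u ξ - u (ξ - 1)) ^ 2)
        = ∑ ξ ∈ Finset.Icc (1:ℤ) N, (u ξ - u (ξ - 1)) ^ 2 := by
      apply tsum_eq_sum
      intro ξ hξ
      rw [hx ξ, hx2 ξ, if_neg]
      simpa [Finset.mem_Icc] using hξ
    rw [h1]
    have h2 : ∀ ξ ∈ Finset.Icc (1:ℤ) N, (u ξ - u (ξ - 1)) ^ 2 = c ^ 2 := by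
      intro ξ hξ
      rw [hx ξ, hx2 ξ, if_pos (Finset.mem_Icc.mp hξ)]
    rw [Finset.sum_congr rfl h2, Finset.sum_const, nsmul_eq_mul, hcardN, hc2]
    field_simp
  refine ⟨u, hsupp, hsum1, ?_⟩
  -- energy computation
  have hx' : ∀ ξ : ℤ, u (ξ + 1) - u ξ = x (ξ + 1) := by
    intro ξ
    have := hx (ξ + 1)
    simpa using this
  have hF : ∀ ξ : ℤ, (-1 : ℝ)/2 * (u ξ - u (ξ-1)) ^ 2
      + (1/2 : ℝ)/2 * ((u ξ - u (ξ-1)) + (u (ξ+1) - u ξ)) ^ 2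
      = (if 1 ≤ ξ ∧ ξ ≤ N then -(c^2)/2 else 0)
        + ((if ξ = 0 then c^2/4 else 0) + (if ξ = N then c^2/4 else 0)) := by
    intro ξ
    rw [hx ξ, hx' ξ]
    simp only [hxdef]
    split_ifs <;> first | ring1 | (exfalso; omega)
  have S1 : Summable (fun ξ : ℤ => if 1 ≤ ξ ∧ ξ ≤ N then -(c^2)/2 else 0) := by
    apply summable_of_ne_finset_zero (s := Finset.Icc (1:ℤ) N)
    intro ξ hξ; rw [if_neg]; simpa [Finset.mem_Icc] using hξ
  have S2 : Summable (fun ξ : ℤ => if ξ = 0 then c^2/4 else (0:ℝ)) := by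
    apply summable_of_ne_finset_zero (s := ({0} : Finset ℤ))
    intro ξ hξ; rw [if_neg]; simpa using hξ
  have S3 : Summable (fun ξ : ℤ => if ξ = N then c^2/4 else (0:ℝ)) := by
    apply summable_of_ne_finset_zero (s := ({N} : Finset ℤ))
    intro ξ hξ; rw [if_neg]; simpa using hξ
  have hE : chainEnergy (-1) (1/2) u
      = (∑' ξ : ℤ, if 1 ≤ ξ ∧ ξ ≤ N then -(c^2)/2 else 0)
        + ((∑' ξ : ℤ, if ξ = 0 then c^2/4 else (0:ℝ))
          + (∑' ξ : ℤ, if ξ = N then c^2/4 else (0:ℝ))) := by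
    unfold chainEnergy
    rw [← Summable.tsum_add S2 S3, ← Summable.tsum_add S1 (S2.add S3)]
    exact tsum_congr hF
  have ht1 : (∑' ξ : ℤ, if 1 ≤ ξ ∧ ξ ≤ N then -(c^2)/2 else 0)
      = (N : ℝ) * (-(c^2)/2) := by
    rw [tsum_eq_sum (s := Finset.Icc (1:ℤ) N)
      (by intro ξ hξ; rw [if_neg]; simpa [Finset.mem_Icc] using hξ)]
    rw [Finset.sum_congr rfl (fun ξ hξ => if_pos (Finset.mem_Icc.mp hξ)),
      Finset.sum_const, nsmul_eq_mul, hcardN]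
  have ht2 : (∑' ξ : ℤ, if ξ = 0 then c^2/4 else (0:ℝ)) = c^2/4 := tsum_ite_eq 0 _
  have ht3 : (∑' ξ : ℤ, if ξ = N then c^2/4 else (0:ℝ)) = c^2/4 := tsum_ite_eq N _
  rw [hE, ht1, ht2, ht3, hc2]
  have hval : (N:ℝ) * (-(N:ℝ)⁻¹/2) + ((N:ℝ)⁻¹/4 + (N:ℝ)⁻¹/4) = -(1/2) + 1/(2*(N:ℝ)) := by
    field_simp; ring
  rw [hval]
  -- 1/(2N) ≤ δ
  have hNge : δ⁻¹ ≤ (N : ℝ) := by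
    have h1 : δ⁻¹ ≤ (⌈δ⁻¹⌉₊ : ℝ) := Nat.le_ceil _
    have h2 : ((⌈δ⁻¹⌉₊ : ℕ) : ℝ) ≤ ((N : ℤ) : ℝ) := by
      have : ((⌈δ⁻¹⌉₊ : ℕ) : ℤ) ≤ N := by omega
      exact_mod_cast this
    linarith
  have : 1/(2*(N:ℝ)) ≤ δ := by
    rw [div_le_iff₀ (by positivity)]
    have : 1 ≤ δ * (N : ℝ) := by
      calc (1:ℝ) = δ * δ⁻¹ := by field_simp
      _ ≤ δ * (N : ℝ) := by apply mul_le_mul_of_nonneg_left hNge hδ.le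
    nlinarith
  linarith

/-- **Lattice stability versus ellipticity in the 1D harmonic chain.** For compactly
supported `u`, the parallelogram identity gives
`E^a(u) = ∑_ξ ((a₁+4a₂)/2 |u'_ξ|² - (a₂/2)|u''_ξ|²)`.  Consequently, for
`a₁ = 2, a₂ = -1/4`, `E^a(u) ≥ (1/2)∑|u'_ξ|²`; whereas for `a₁ = -1, a₂ = 1/2`,
for every `δ > 0` there is a compactly supported `u` with `∑|u'_ξ|² = 1` and
`E^a(u) ≤ -1/2 + δ` — even though `a₁ + 4a₂ = 1 > 0` in both cases. -/
theorem stmt_19 :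
    (∀ (a₁ a₂ : ℝ) (u : ℤ → ℝ), (Function.support u).Finite →
      chainEnergy a₁ a₂ u
        = ∑' ξ : ℤ, ((a₁ + 4 * a₂) / 2 * (u ξ - u (ξ - 1)) ^ 2
            - a₂ / 2 * (u (ξ + 1) - 2 * u ξ + u (ξ - 1)) ^ 2))
    ∧ (∀ u : ℤ → ℝ, (Function.support u).Finite →
        (1/2 : ℝ) * ∑' ξ : ℤ, (u ξ - u (ξ - 1)) ^ 2 ≤ chainEnergy 2 (-(1/4)) u)
    ∧ (∀ δ : ℝ, 0 < δ → ∃ u : ℤ → ℝ, (Function.support u).Finite ∧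
        (∑' ξ : ℤ, (u ξ - u (ξ - 1)) ^ 2) = 1 ∧
        chainEnergy (-1) (1/2) u ≤ -(1/2) + δ)
    ∧ ((2 : ℝ) + 4 * (-(1/4)) = 1 ∧ (-1 : ℝ) + 4 * (1/2) = 1) :=
  ⟨part1, part2, part3, by norm_num, by norm_num⟩
end
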